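/- arXiv:2604.10479 — 7 statements merged into one kernel-verified Lean document; each statement's English description precedes it below -/
import Mathlib

section
/- Let q ≥ 2 and let k, m be positive integers with 4m(1 + q^{k/4}) ≤ q^{k/3}. Let Y_1, …, Y_m be independent random variables, each distributed either as Binom(q^k, q^{−3k/4}) or as 1 + Binom(q^k − 1, q^{−3k/4}). Then Pr[Y_1 + … + Y_m > q^{k/3}] ≤ m·exp(−q^{k/4}/6). -/
open Finset

open scoped Classical

noncomputable def bpmf (N : ℕ) (p : ℝ) (b : Bool) (j : ℕ) : ℝ :=
  if b then
    (if j = 0 then 0 else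
      ((N - 1).choose (j - 1) : ℝ) * p ^ (j - 1) * (1 - p) ^ ((N - 1) - (j - 1)))
  else ((N.choose j : ℝ)) * p ^ j * (1 - p) ^ (N - j)

lemma bpmf_nonneg {N : ℕ} {p : ℝ} (hp0 : 0 ≤ p) (hp1 : p ≤ 1) (b : Bool) (j : ℕ) :
    0 ≤ bpmf N p b j := by
  have h1 : (0:ℝ) ≤ 1 - p := by linarith
  cases b with
  | false => simp only [bpmf]; positivity
  | true =>
    simp only [bpmf, if_true]
    split
    · exact le_refl 0
    · positivity

lemma bpmf_mgf_false (N : ℕ) (p c : ℝ) :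
    ∑ j ∈ Finset.range (N + 1), bpmf N p false j * c ^ j = (p * c + (1 - p)) ^ N := by
  rw [add_pow]
  refine Finset.sum_congr rfl fun j hj => ?_
  simp only [bpmf, Bool.false_eq_true, if_false]
  rw [mul_pow]; ring

lemma bpmf_mgf_true (N : ℕ) (hN : 1 ≤ N) (p c : ℝ) :
    ∑ j ∈ Finset.range (N + 1), bpmf N p true j * c ^ j = c * (p * c + (1 - p)) ^ (N - 1) := by
  rw [Finset.sum_range_succ']
  have h0 : bpmf N p true 0 * c ^ 0 = 0 := by simp [bpmf]
  rw [h0, add_zero]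
  have hrange : (N - 1) + 1 = N := Nat.succ_pred_eq_of_pos hN
  calc ∑ i ∈ Finset.range N, bpmf N p true (i + 1) * c ^ (i + 1)
      = ∑ i ∈ Finset.range ((N - 1) + 1), c * (bpmf (N - 1) p false i * c ^ i) := by
        rw [hrange]
        refine Finset.sum_congr rfl fun i _ => ?_
        simp only [bpmf, Nat.succ_ne_zero, if_false, Nat.add_sub_cancel, if_true, Bool.false_eq_true]
        ring
    _ = c * (p * c + (1 - p)) ^ (N - 1) := by rw [← Finset.mul_sum, bpmf_mgf_false]

lemma bpmf_sum_one {N : ℕ} (hN : 1 ≤ N) (p : ℝ) (b : Bool) :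
    ∑ j ∈ Finset.range (N + 1), bpmf N p b j = 1 := by
  have h1 : p * 1 + (1 - p) = 1 := by ring
  cases b with
  | false =>
    have h := bpmf_mgf_false N p 1
    simp only [one_pow, mul_one] at h
    rw [h]; norm_num
  | true =>
    have h := bpmf_mgf_true N hN p 1
    simp only [one_pow, mul_one] at h
    rw [h]; norm_num

lemma chernoff_single {N : ℕ} (hN : 1 ≤ N) {p : ℝ} (hp0 : 0 ≤ p) (hp1 : p ≤ 1)
    (a t : ℝ) (ht : 0 ≤ t) (b : Bool) :
    ∑ j ∈ Finset.range (N + 1), (if a < (j : ℝ) then bpmf N p b j else 0) ≤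
      Real.exp (-(t * a) + t + (N : ℝ) * (p * (Real.exp t - 1))) := by
  set c : ℝ := Real.exp t with hc
  have hc1 : 1 ≤ c := Real.one_le_exp ht
  have hc0 : (0:ℝ) ≤ c := by linarith
  have hptw : ∀ j ∈ Finset.range (N + 1),
      (if a < (j : ℝ) then bpmf N p b j else 0) ≤
        Real.exp (-(t * a)) * (bpmf N p b j * c ^ j) := by
    intro j _
    have hb0 : 0 ≤ bpmf N p b j := bpmf_nonneg hp0 hp1 b j
    have hcj : Real.exp (-(t * a)) * c ^ j = Real.exp (t * ((j : ℝ) - a)) := by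
      rw [hc, ← Real.exp_nat_mul, ← Real.exp_add]
      congr 1; ring
    by_cases hja : a < (j : ℝ)
    · rw [if_pos hja]
      have h1 : (1:ℝ) ≤ Real.exp (t * ((j : ℝ) - a)) :=
        Real.one_le_exp (by nlinarith)
      calc bpmf N p b j = bpmf N p b j * 1 := (mul_one _).symm
        _ ≤ bpmf N p b j * Real.exp (t * ((j : ℝ) - a)) := by
            exact mul_le_mul_of_nonneg_left h1 hb0
        _ = Real.exp (-(t * a)) * (bpmf N p b j * c ^ j) := by rw [← hcj]; ring
    · rw [if_neg hja]
      exact mul_nonneg (Real.exp_pos _).le (mul_nonneg hb0 (pow_nonneg hc0 j))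
  have hsum1 : ∑ j ∈ Finset.range (N + 1), (if a < (j : ℝ) then bpmf N p b j else 0) ≤
      Real.exp (-(t * a)) * ∑ j ∈ Finset.range (N + 1), bpmf N p b j * c ^ j := by
    rw [Finset.mul_sum]; exact Finset.sum_le_sum hptw
  have hu : 0 ≤ p * (c - 1) := mul_nonneg hp0 (by linarith)
  have hbase : ∀ M : ℕ, (p * c + (1 - p)) ^ M ≤ Real.exp ((M : ℝ) * (p * (c - 1))) := by
    intro M
    have h2 : 1 + p * (c - 1) ≤ Real.exp (p * (c - 1)) := by
      have := Real.add_one_le_exp (p * (c - 1)); linarith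
    have h3 : (p * c + (1 - p)) ^ M ≤ Real.exp (p * (c - 1)) ^ M := by
      apply pow_le_pow_left₀ (by nlinarith) (by nlinarith)
    calc (p * c + (1 - p)) ^ M ≤ Real.exp (p * (c - 1)) ^ M := h3
      _ = Real.exp ((M : ℝ) * (p * (c - 1))) := (Real.exp_nat_mul _ M).symm
  have hmgf : ∑ j ∈ Finset.range (N + 1), bpmf N p b j * c ^ j ≤
      c * Real.exp ((N : ℝ) * (p * (c - 1))) := by
    cases b with
    | false =>
      rw [bpmf_mgf_false]
      calc (p * c + (1 - p)) ^ N ≤ Real.exp ((N : ℝ) * (p * (c - 1))) := hbase N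
        _ ≤ c * Real.exp ((N : ℝ) * (p * (c - 1))) :=
            le_mul_of_one_le_left (Real.exp_pos _).le hc1
    | true =>
      rw [bpmf_mgf_true N hN]
      have h4 : (p * c + (1 - p)) ^ (N - 1) ≤ Real.exp ((N : ℝ) * (p * (c - 1))) := by
        refine le_trans (hbase (N - 1)) (Real.exp_le_exp.mpr ?_)
        have h5 : ((N - 1 : ℕ) : ℝ) ≤ (N : ℝ) := by exact_mod_cast Nat.sub_le N 1
        exact mul_le_mul_of_nonneg_right h5 hu
      exact mul_le_mul_of_nonneg_left h4 hc0
  calc ∑ j ∈ Finset.range (N + 1), (if a < (j : ℝ) then bpmf N p b j else 0)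
      ≤ Real.exp (-(t * a)) * ∑ j ∈ Finset.range (N + 1), bpmf N p b j * c ^ j := hsum1
    _ ≤ Real.exp (-(t * a)) * (c * Real.exp ((N : ℝ) * (p * (c - 1)))) :=
        mul_le_mul_of_nonneg_left hmgf (Real.exp_pos _).le
    _ = Real.exp (-(t * a) + t + (N : ℝ) * (p * (Real.exp t - 1))) := by
        rw [hc, ← Real.exp_add, ← Real.exp_add, add_assoc]

/-- Probability of the event `P` under the distribution on the finite sample space
`Ω` whose probability mass function is `w`. -/
noncomputable def prSum {Ω : Type*} [Fintype Ω] (w : Ω → ℝ) (P : Ω → Prop) : ℝ :=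
  ∑ ω : Ω, if P ω then w ω else 0

set_option maxHeartbeats 1000000 in
/-- Let `q ≥ 2` and let `k, m` be positive integers with
`4m(1 + q^{k/4}) ≤ q^{k/3}`.  Let `Y_1, …, Y_m` be independent, each distributed
either as `Binom(q^k, q^{−3k/4})` (when `σ i = false`) or as
`1 + Binom(q^k − 1, q^{−3k/4})` (when `σ i = true`); the joint distribution is
given by the product of the binomial mass functions on the sample space
`Fin m → Fin (q^k + 1)` (which supports both distributions).  Then
`Pr[Y_1 + … + Y_m > q^{k/3}] ≤ m·exp(−q^{k/4}/6)`. -/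
theorem stmt7 (q k m : ℕ) (hq : 2 ≤ q) (hk : 0 < k) (hm : 0 < m)
    (hsum : 4 * (m : ℝ) * (1 + (q : ℝ) ^ ((k : ℝ) / 4)) ≤ (q : ℝ) ^ ((k : ℝ) / 3))
    (σ : Fin m → Bool) :
    prSum
      (fun y : Fin m → Fin (q ^ k + 1) =>
        ∏ i : Fin m,
          (if σ i then
            (if (y i : ℕ) = 0 then 0 else
              ((q ^ k - 1).choose ((y i : ℕ) - 1) : ℝ) *
                ((q : ℝ) ^ (-(3 * (k : ℝ)) / 4)) ^ ((y i : ℕ) - 1) *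
                (1 - (q : ℝ) ^ (-(3 * (k : ℝ)) / 4)) ^ ((q ^ k - 1) - ((y i : ℕ) - 1)))
          else
            ((q ^ k).choose (y i : ℕ) : ℝ) *
              ((q : ℝ) ^ (-(3 * (k : ℝ)) / 4)) ^ (y i : ℕ) *
              (1 - (q : ℝ) ^ (-(3 * (k : ℝ)) / 4)) ^ (q ^ k - (y i : ℕ))))
      (fun y => (q : ℝ) ^ ((k : ℝ) / 3) < ∑ i : Fin m, ((y i : ℕ) : ℝ)) ≤
    (m : ℝ) * Real.exp (-(q : ℝ) ^ ((k : ℝ) / 4) / 6) := by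
  classical
  set p : ℝ := (q : ℝ) ^ (-(3 * (k : ℝ)) / 4) with hp_def
  set Q : ℝ := (q : ℝ) ^ ((k : ℝ) / 4) with hQ_def
  set R : ℝ := (q : ℝ) ^ ((k : ℝ) / 3) with hR_def
  set N : ℕ := q ^ k with hN_def
  have hq1 : (1:ℝ) ≤ (q:ℝ) := by exact_mod_cast Nat.one_le_of_lt hq
  have hq0 : (0:ℝ) < (q:ℝ) := by linarith
  have hp0 : 0 ≤ p := (Real.rpow_pos_of_pos hq0 _).le
  have h3k : (0:ℝ) ≤ 3 * (k:ℝ) := by positivity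
  have hp1 : p ≤ 1 := Real.rpow_le_one_of_one_le_of_nonpos hq1 (by linarith)
  have hQ0 : 0 ≤ Q := (Real.rpow_pos_of_pos hq0 _).le
  have hN1 : 1 ≤ N := Nat.one_le_pow k q (by omega)
  have hNp : (N : ℝ) * p = Q := by
    rw [hp_def, hQ_def, hN_def]
    push_cast
    rw [← Real.rpow_natCast (q:ℝ) k, ← Real.rpow_add hq0]
    congr 1; ring
  set a : ℝ := 4 * (1 + Q) with ha_def
  -- rewrite the weight as a product of bpmf's
  have hprod : ∀ (y : Fin m → Fin (N + 1)) (i : Fin m),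
      (if σ i then
        (if (y i : ℕ) = 0 then 0 else
          ((N - 1).choose ((y i : ℕ) - 1) : ℝ) * p ^ ((y i : ℕ) - 1) *
            (1 - p) ^ ((N - 1) - ((y i : ℕ) - 1)))
      else
        ((N.choose (y i : ℕ) : ℝ)) * p ^ (y i : ℕ) * (1 - p) ^ (N - (y i : ℕ)))
      = bpmf N p (σ i) (y i : ℕ) := by
    intro y i; cases σ i <;> simp [bpmf]
  unfold prSum
  simp only [hprod]
  have hWnn : ∀ y : Fin m → Fin (N + 1), 0 ≤ ∏ i, bpmf N p (σ i) (y i : ℕ) :=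
    fun y => Finset.prod_nonneg fun i _ => bpmf_nonneg hp0 hp1 _ _
  have hstep1 : (∑ y : Fin m → Fin (N + 1),
        if R < ∑ i, ((y i : ℕ) : ℝ) then ∏ i, bpmf N p (σ i) (y i : ℕ) else 0)
      ≤ ∑ y : Fin m → Fin (N + 1), ∑ i : Fin m,
          (if a < ((y i : ℕ) : ℝ) then ∏ i', bpmf N p (σ i') (y i' : ℕ) else 0) := by
    refine Finset.sum_le_sum fun y _ => ?_
    by_cases hy : R < ∑ i, ((y i : ℕ) : ℝ)
    · rw [if_pos hy]
      have hex : ∃ i, a < ((y i : ℕ) : ℝ) := by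
        by_contra hno
        push_neg at hno
        have hle : ∑ i, ((y i : ℕ) : ℝ) ≤ ∑ _i : Fin m, a :=
          Finset.sum_le_sum fun i _ => hno i
        rw [Finset.sum_const, Finset.card_univ, Fintype.card_fin, nsmul_eq_mul] at hle
        have hma : (m:ℝ) * a = 4 * (m:ℝ) * (1 + Q) := by rw [ha_def]; ring
        rw [hma] at hle
        linarith
      obtain ⟨i0, hi0⟩ := hex
      have hterm : (∏ i', bpmf N p (σ i') (y i' : ℕ)) =
          (if a < ((y i0 : ℕ) : ℝ) then ∏ i', bpmf N p (σ i') (y i' : ℕ) else 0) :=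
        (if_pos hi0).symm
      refine hterm.le.trans (Finset.single_le_sum
        (f := fun i => if a < ((y i : ℕ) : ℝ) then ∏ i', bpmf N p (σ i') (y i' : ℕ) else 0)
        (fun i _ => ?_) (Finset.mem_univ i0))
      show 0 ≤ (if a < ((y i : ℕ) : ℝ) then ∏ i', bpmf N p (σ i') (y i' : ℕ) else 0)
      split
      · exact hWnn y
      · exact le_refl 0
    · rw [if_neg hy]
      refine Finset.sum_nonneg fun i _ => ?_
      split
      · exact hWnn y
      · exact le_refl 0
  have hfact : ∀ i : Fin m,
      (∑ y : Fin m → Fin (N + 1),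
          if a < ((y i : ℕ) : ℝ) then ∏ i', bpmf N p (σ i') (y i' : ℕ) else 0)
      = ∑ j : Fin (N + 1), (if a < ((j : ℕ) : ℝ) then bpmf N p (σ i) (j : ℕ) else 0) := by
    intro i
    have hG : ∀ y : Fin m → Fin (N + 1),
        (∏ i', (if i' = i then (if a < ((y i' : ℕ) : ℝ) then bpmf N p (σ i') (y i' : ℕ) else 0)
                else bpmf N p (σ i') (y i' : ℕ)))
        = (if a < ((y i : ℕ) : ℝ) then ∏ i', bpmf N p (σ i') (y i' : ℕ) else 0) := by
      intro y
      by_cases hc : a < ((y i : ℕ) : ℝ)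
      · rw [if_pos hc]
        refine Finset.prod_congr rfl fun i' _ => ?_
        by_cases h' : i' = i
        · rw [if_pos h']
          rw [if_pos (by rw [h']; exact hc)]
        · rw [if_neg h']
      · rw [if_neg hc]
        rw [Fintype.prod_eq_mul_prod_compl i, if_pos rfl, if_neg hc, zero_mul]
    calc (∑ y : Fin m → Fin (N + 1),
            if a < ((y i : ℕ) : ℝ) then ∏ i', bpmf N p (σ i') (y i' : ℕ) else 0)
        = ∑ y : Fin m → Fin (N + 1), ∏ i',
            (if i' = i then (if a < ((y i' : ℕ) : ℝ) then bpmf N p (σ i') (y i' : ℕ) else 0)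
             else bpmf N p (σ i') (y i' : ℕ)) :=
          (Finset.sum_congr rfl fun y _ => (hG y).symm)
      _ = ∑ y ∈ Fintype.piFinset (fun _ : Fin m => (Finset.univ : Finset (Fin (N + 1)))), ∏ i',
            (if i' = i then (if a < ((y i' : ℕ) : ℝ) then bpmf N p (σ i') (y i' : ℕ) else 0)
             else bpmf N p (σ i') (y i' : ℕ)) := by rw [Fintype.piFinset_univ]
      _ = ∏ i', ∑ j : Fin (N + 1),
            (if i' = i then (if a < ((j : ℕ) : ℝ) then bpmf N p (σ i') (j : ℕ) else 0)
             else bpmf N p (σ i') (j : ℕ)) :=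
          (Finset.prod_univ_sum (fun _ : Fin m => (Finset.univ : Finset (Fin (N + 1))))
            (fun i' j => (if i' = i then (if a < ((j : ℕ) : ℝ) then bpmf N p (σ i') (j : ℕ) else 0)
             else bpmf N p (σ i') (j : ℕ)))).symm
      _ = ∑ j : Fin (N + 1), (if a < ((j : ℕ) : ℝ) then bpmf N p (σ i) (j : ℕ) else 0) := by
          rw [Fintype.prod_eq_mul_prod_compl i]
          have hcompl : ∀ i' ∈ ({i}ᶜ : Finset (Fin m)),
              (∑ j : Fin (N + 1),
                (if i' = i then (if a < ((j : ℕ) : ℝ) then bpmf N p (σ i') (j : ℕ) else 0)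
                 else bpmf N p (σ i') (j : ℕ))) = 1 := by
            intro i' hi'
            have h' : i' ≠ i := by simpa using hi'
            simp only [if_neg h']
            rw [Fin.sum_univ_eq_sum_range (fun j => bpmf N p (σ i') j) (N + 1)]
            exact bpmf_sum_one hN1 p (σ i')
          rw [Finset.prod_congr rfl hcompl, Finset.prod_const_one, mul_one]
          simp
  have hsingle : ∀ b : Bool,
      (∑ j : Fin (N + 1), (if a < ((j : ℕ) : ℝ) then bpmf N p b (j : ℕ) else 0)) ≤
        Real.exp (-Q / 6) := by
    intro b
    rw [Fin.sum_univ_eq_sum_range (fun j => if a < (j : ℝ) then bpmf N p b j else 0) (N + 1)]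
    refine le_trans (chernoff_single hN1 hp0 hp1 a (1/2) (by norm_num) b) ?_
    rw [Real.exp_le_exp]
    have hNpc : (N : ℝ) * (p * (Real.exp (1/2) - 1)) = Q * (Real.exp (1/2) - 1) := by
      rw [← hNp]; ring
    rw [hNpc]
    have hsq : Real.exp ((2:ℕ) * (1/2 : ℝ)) = Real.exp (1/2 : ℝ) ^ 2 :=
      Real.exp_nat_mul _ 2
    norm_num at hsq
    have he : Real.exp (1/2 : ℝ) ≤ 17/6 := by
      nlinarith [Real.exp_one_lt_d9, Real.exp_pos (1/2 : ℝ), hsq]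
    have hprod2 : 0 ≤ Q * (17/6 - Real.exp (1/2 : ℝ)) :=
      mul_nonneg hQ0 (by linarith)
    rw [ha_def]
    nlinarith [hprod2, hQ0]
  calc (∑ y : Fin m → Fin (N + 1),
        if R < ∑ i, ((y i : ℕ) : ℝ) then ∏ i, bpmf N p (σ i) (y i : ℕ) else 0)
      ≤ ∑ y : Fin m → Fin (N + 1), ∑ i : Fin m,
          (if a < ((y i : ℕ) : ℝ) then ∏ i', bpmf N p (σ i') (y i' : ℕ) else 0) := hstep1
    _ = ∑ i : Fin m, ∑ y : Fin m → Fin (N + 1),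
          (if a < ((y i : ℕ) : ℝ) then ∏ i', bpmf N p (σ i') (y i' : ℕ) else 0) :=
        Finset.sum_comm
    _ = ∑ i : Fin m, ∑ j : Fin (N + 1),
          (if a < ((j : ℕ) : ℝ) then bpmf N p (σ i) (j : ℕ) else 0) :=
        Finset.sum_congr rfl fun i _ => hfact i
    _ ≤ ∑ _i : Fin m, Real.exp (-Q / 6) :=
        Finset.sum_le_sum fun i _ => hsingle (σ i)
    _ = (m : ℝ) * Real.exp (-Q / 6) := by
        rw [Finset.sum_const, Finset.card_univ, Fintype.card_fin, nsmul_eq_mul]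
end

section
/- Let G be an (m, n, k)-matrix over F_2, let Σ be a finite alphabet, let s ∈ Σ^n have pairwise distinct entries, and let α, β ∈ [0, 1]. Sample a random vector w ∈ (F_2 ∪ {?})^m as follows: draw a uniformly random function t : Σ → F_2, and independently for each i ∈ [m], set w_i = '?' with probability α; otherwise, with probability β set w_i to an independent uniform random bit, and with the remaining probability 1 − β set w_i = t(s_{N_G(i,1)}) + … + t(s_{N_G(i,k)}) (addition in F_2). Then w has exactly the same distribution as the random vector c' obtained as follows: draw x ∈ F_2^n uniformly at random, let c = Gx, and independently for each i ∈ [m] set c'_i = '?' with probability α, set c'_i to an independent uniform random bit with probability (1 − α)·β, and set c'_i = c_i otherwise. -/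
open Finset

open scoped Classical

/-- Let `G` be an `(m,n,k)`-matrix over `F_2`, `Σ` a finite alphabet,
`s ∈ Σ^n` with pairwise distinct entries, and `α, β ∈ [0,1]`.  Sample
`w ∈ (F_2 ∪ {?})^m` by drawing a uniform `t : Σ → F_2` and, independently for each
`i`, setting `w_i = ?` with probability `α`, a uniform bit with probability
`(1−α)·β`, and `w_i = t(s_{N_G(i,1)}) + … + t(s_{N_G(i,k)})` otherwise (the sum of
`t(s_j)` over the nonzero columns `j` of row `i`, written as `∑_j G_{ij}·t(s_j)`).
Then `w` has exactly the same distribution as `c'`, obtained by drawing a uniform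
`x ∈ F_2^n`, setting `c = Gx`, and independently erasing/corrupting each
coordinate with the same probabilities.  (Equality of distributions is stated as
equality of the probability mass functions at every point `w`.) -/
theorem stmt8 (m n k : ℕ) (G : Fin m → Fin n → ZMod 2)
    (hG : ∀ i, (Finset.univ.filter (fun j => G i j ≠ 0)).card = k)
    (S : Type*) [Fintype S]
    (s : Fin n → S) (hs : Function.Injective s)
    (α β : ℝ) (hα0 : 0 ≤ α) (hα1 : α ≤ 1) (hβ0 : 0 ≤ β) (hβ1 : β ≤ 1)
    (w : Fin m → Option (ZMod 2)) :
    (∑ t : S → ZMod 2, (1 / (Nat.card (S → ZMod 2) : ℝ)) *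
        ∏ i : Fin m,
          (if w i = none then α else
            (1 - α) * β / 2 +
              if w i = some (∑ j, G i j * t (s j)) then (1 - α) * (1 - β) else 0)) =
    (∑ x : Fin n → ZMod 2, (1 / (Nat.card (Fin n → ZMod 2) : ℝ)) *
        ∏ i : Fin m,
          (if w i = none then α else
            (1 - α) * β / 2 +
              if w i = some (∑ j, G i j * x j) then (1 - α) * (1 - β) else 0)) := by
  classical
  set C := ((Set.range s)ᶜ : Set S) with hC
  let E : (S → ZMod 2) ≃ ((Fin n → ZMod 2) × (C → ZMod 2)) :=
    { toFun := fun t => (fun j => t (s j), fun a => t a.1),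
      invFun := fun p a =>
        if h : a ∈ Set.range s then p.1 ((Equiv.ofInjective s hs).symm ⟨a, h⟩)
        else p.2 ⟨a, h⟩,
      left_inv := by
        intro t; funext a
        by_cases h : a ∈ Set.range s
        · simp only [dif_pos h]
          rw [Equiv.apply_ofInjective_symm hs ⟨a, h⟩]
        · simp only [dif_neg h]
      right_inv := by
        intro p
        refine Prod.ext ?_ ?_
        · funext j
          simp only [dif_pos (Set.mem_range_self j), Equiv.ofInjective_symm_apply]
        · funext a
          have : (a : S) ∉ Set.range s := a.2
          simp only [dif_neg this] }
  have key : ∀ F : (Fin n → ZMod 2) → ℝ,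
      ∑ t : S → ZMod 2, F (fun j => t (s j)) =
        (Fintype.card (C → ZMod 2) : ℝ) * ∑ x, F x := by
    intro F
    rw [← Equiv.sum_comp E.symm (fun t => F (fun j => t (s j)))]
    have h1 : ∀ p : (Fin n → ZMod 2) × (C → ZMod 2),
        (fun j => E.symm p (s j)) = p.1 := by
      intro p; funext j
      show (if h : s j ∈ Set.range s then p.1 ((Equiv.ofInjective s hs).symm ⟨s j, h⟩)
        else p.2 ⟨s j, h⟩) = p.1 j
      simp only [dif_pos (Set.mem_range_self j), Equiv.ofInjective_symm_apply]
    simp_rw [h1]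
    rw [Fintype.sum_prod_type]
    simp [Finset.sum_const, mul_comm, Finset.mul_sum]
  have hcard : (Nat.card (S → ZMod 2) : ℝ) =
      (Nat.card (Fin n → ZMod 2) : ℝ) * (Fintype.card (C → ZMod 2) : ℝ) := by
    have := Fintype.card_congr E
    simp only [Fintype.card_prod] at this
    rw [Nat.card_eq_fintype_card, Nat.card_eq_fintype_card, this]
    push_cast; ring
  have hpos : (0 : ℝ) < Nat.card (Fin n → ZMod 2) := by
    rw [Nat.card_eq_fintype_card]; exact_mod_cast Fintype.card_pos
  have hpos2 : (0 : ℝ) < Fintype.card (C → ZMod 2) := by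
    exact_mod_cast Fintype.card_pos
  calc ∑ t : S → ZMod 2, (1 / (Nat.card (S → ZMod 2) : ℝ)) *
        ∏ i : Fin m,
          (if w i = none then α else
            (1 - α) * β / 2 +
              if w i = some (∑ j, G i j * t (s j)) then (1 - α) * (1 - β) else 0)
      = (Fintype.card (C → ZMod 2) : ℝ) * ∑ x : Fin n → ZMod 2,
          (1 / (Nat.card (S → ZMod 2) : ℝ)) *
          ∏ i : Fin m,
            (if w i = none then α else
              (1 - α) * β / 2 +
                if w i = some (∑ j, G i j * x j) then (1 - α) * (1 - β) else 0) := by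
        exact key (fun x => (1 / (Nat.card (S → ZMod 2) : ℝ)) *
          ∏ i : Fin m,
            (if w i = none then α else
              (1 - α) * β / 2 +
                if w i = some (∑ j, G i j * x j) then (1 - α) * (1 - β) else 0))
    _ = _ := by
        rw [Finset.mul_sum]
        refine Finset.sum_congr rfl fun x _ => ?_
        rw [← mul_assoc]
        congr 1
        rw [hcard]
        field_simp
end

section
/- There is an absolute constant c > 0 such that the following holds. Let n, m, k be positive integers with k ≤ n, let H be an (m, n, k)-matrix, let Σ and Γ be finite alphabets, and let S ⊆ Γ^m be any fixed subset. If f_1, …, f_m : Σ^k → Γ are independent uniformly random functions (collectively F), then with probability at least 1 − 2·exp(−c·|Σ|^{4k/5}/m) over the choice of F, one has | Pr_{b ∼ P_{H,F}}[b ∈ S] − |S|/|Γ|^m | < |Σ|^{−k/10}. -/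
open Finset

open scoped Classical

/-- `N_H(i, ·)`: the column indices of the nonzero entries of the row `r` (which
has exactly `k` of them), in increasing order. -/
noncomputable def nbr {n k : ℕ} (r : Fin n → ZMod 2)
    (hr : (Finset.univ.filter (fun c => r c ≠ 0)).card = k) (j : Fin k) : Fin n :=
  ((Finset.univ.filter (fun c => r c ≠ 0)).orderIsoOfFin hr j : Fin n)

namespace Stmt10Aux

lemma exp_le_cosh_add (L x u : ℝ) (hL : 0 < L) (hx : |x| ≤ L) :
    Real.exp (u * x) ≤ Real.cosh (u * L) + (x / L) * Real.sinh (u * L) := by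
  obtain ⟨hx1, hx2⟩ := abs_le.mp hx
  set θ : ℝ := (L - x) / (2 * L) with hθ
  have hθ0 : (0:ℝ) ≤ θ := by
    apply div_nonneg (by linarith) (by linarith)
  have hθ1 : (0:ℝ) ≤ 1 - θ := by
    rw [hθ]
    rw [sub_nonneg, div_le_one (by linarith)]
    linarith
  have hsum : θ + (1 - θ) = 1 := by ring
  have hconv := convexOn_exp.2 (Set.mem_univ (-(u * L))) (Set.mem_univ (u * L))
    hθ0 hθ1 hsum
  have harg : θ • (-(u * L)) + (1 - θ) • (u * L) = u * x := by
    simp only [smul_eq_mul, hθ]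
    field_simp
    ring
  rw [harg] at hconv
  refine hconv.trans (le_of_eq ?_)
  simp only [smul_eq_mul, Real.cosh_eq, Real.sinh_eq, hθ]
  field_simp
  ring

lemma sum_exp_le {A : Type} [Fintype A] [Nonempty A] (v : A → ℝ) (L t : ℝ)
    (hL : 0 ≤ L) (hv : ∀ a b, |v a - v b| ≤ L) (h0 : ∑ a, v a = 0) :
    ∑ a, Real.exp (t * v a) ≤ (Fintype.card A : ℝ) * Real.exp (t ^ 2 * L ^ 2 / 2) := by
  have hcard : (0:ℝ) < Fintype.card A := by
    exact_mod_cast Fintype.card_pos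
  have hex1 : ∃ a, v a ≤ 0 := by
    by_contra hc
    push_neg at hc
    have : 0 < ∑ a, v a := Finset.sum_pos (fun a _ => hc a) univ_nonempty
    linarith [this, h0.le]
  have hex2 : ∃ a, 0 ≤ v a := by
    by_contra hc
    push_neg at hc
    have : ∑ a, v a < 0 := Finset.sum_neg (fun a _ => hc a) univ_nonempty
    linarith
  obtain ⟨a₀, ha₀⟩ := hex1
  obtain ⟨a₁, ha₁⟩ := hex2
  have habs : ∀ a, |v a| ≤ L := by
    intro a
    rw [abs_le]
    constructor
    · have := abs_le.mp (hv a₁ a)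
      linarith [this.2]
    · have := abs_le.mp (hv a a₀)
      linarith [this.2]
  rcases hL.eq_or_lt with h | hLpos
  · have hv0 : ∀ a, v a = 0 := fun a => abs_nonpos_iff.mp (h ▸ habs a)
    simp only [hv0, mul_zero, Real.exp_zero]
    rw [Finset.sum_const, card_univ, nsmul_eq_mul, mul_one]
    nlinarith [Real.exp_pos (t ^ 2 * L ^ 2 / 2),
      Real.one_le_exp (by positivity : (0:ℝ) ≤ t ^ 2 * L ^ 2 / 2)]
  · calc ∑ a, Real.exp (t * v a)
        ≤ ∑ a, (Real.cosh (t * L) + (v a / L) * Real.sinh (t * L)) := by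
          apply Finset.sum_le_sum
          intro a _
          exact exp_le_cosh_add L (v a) t hLpos (habs a)
      _ = (Fintype.card A : ℝ) * Real.cosh (t * L) := by
          rw [Finset.sum_add_distrib, Finset.sum_const, card_univ, nsmul_eq_mul]
          have : ∑ a, (v a / L) * Real.sinh (t * L)
              = (∑ a, v a) / L * Real.sinh (t * L) := by
            rw [Finset.sum_div, Finset.sum_mul]
          rw [this, h0]
          simp
      _ ≤ (Fintype.card A : ℝ) * Real.exp (t ^ 2 * L ^ 2 / 2) := by
          apply mul_le_mul_of_nonneg_left _ hcard.le
          have := Real.cosh_le_exp_half_sq (t * L)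
          convert this using 2
          · rfl
          · ring

lemma mcdiarmid_mgf {A : Type} [Fintype A] [Nonempty A] :
    ∀ (N : ℕ) (g : (Fin N → A) → ℝ) (c : Fin N → ℝ),
      (∀ (i : Fin N) (x y : Fin N → A), (∀ j, j ≠ i → x j = y j) → |g x - g y| ≤ c i) →
      ∀ (t : ℝ),
      ∑ x, Real.exp (t * (g x - (∑ z, g z) / (Fintype.card (Fin N → A) : ℝ))) ≤
        (Fintype.card (Fin N → A) : ℝ) * Real.exp (t ^ 2 * (∑ i, c i ^ 2) / 2) := by
  intro N
  induction N with
  | zero =>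
      intro g c hg t
      have h1 : Fintype.card (Fin 0 → A) = 1 := by simp
      rw [h1]
      have h2 : ∀ x : Fin 0 → A, g x - (∑ z, g z) / ((1:ℕ) : ℝ) = 0 := by
        intro x
        have : ∑ z, g z = g x := by
          rw [Fintype.sum_eq_single x]
          intro y hy
          exact absurd (funext fun j => j.elim0) hy
        rw [this]; simp
      calc ∑ x, Real.exp (t * (g x - (∑ z, g z) / ((1:ℕ) : ℝ)))
          = ∑ x : Fin 0 → A, 1 := by
            apply Finset.sum_congr rfl
            intro x _
            rw [h2 x]; simp
        _ = 1 := by rw [Finset.sum_const, card_univ, h1]; simp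
        _ ≤ _ := by
            have : (1:ℝ) ≤ Real.exp (t ^ 2 * (∑ i : Fin 0, c i ^ 2) / 2) := by
              apply Real.one_le_exp; positivity
            simpa using this
  | succ N ih =>
      intro g c hg t
      have hQ0 : (0:ℝ) < (Fintype.card A : ℝ) := by exact_mod_cast Fintype.card_pos
      set Q : ℝ := (Fintype.card A : ℝ) with hQdef
      set h : (Fin N → A) → ℝ := fun y => (∑ a, g (Fin.cons a y)) / Q with hh
      have hsplit : ∀ (φ : (Fin (N+1) → A) → ℝ),
          ∑ x, φ x = ∑ y : Fin N → A, ∑ a : A, φ (Fin.cons a y) := by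
        intro φ
        rw [← (Fin.consEquiv (fun _ : Fin (N+1) => A)).sum_comp φ, Fintype.sum_prod_type,
          Finset.sum_comm]
        rfl
      have hcard : (Fintype.card (Fin (N+1) → A) : ℝ) = Q * (Fintype.card (Fin N → A) : ℝ) := by
        simp [Fintype.card_fun, pow_succ, hQdef]
        ring
      have hcardN : (0:ℝ) < (Fintype.card (Fin N → A) : ℝ) := by
        exact_mod_cast Fintype.card_pos
      set μ : ℝ := (∑ z, g z) / (Fintype.card (Fin (N+1) → A) : ℝ) with hμdef
      have hμ : μ = (∑ y, h y) / (Fintype.card (Fin N → A) : ℝ) := by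
        rw [hμdef, hh]
        have : ∑ y : Fin N → A, (∑ a, g (Fin.cons a y)) / Q
            = (∑ z, g z) / Q := by
          rw [← Finset.sum_div, ← hsplit]
        rw [this, hcard]
        field_simp
      have hhdiff : ∀ (j : Fin N) (y z : Fin N → A),
          (∀ l, l ≠ j → y l = z l) → |h y - h z| ≤ c j.succ := by
        intro j y z hyz
        have hdiff : h y - h z = (∑ a, (g (Fin.cons a y) - g (Fin.cons a z))) / Q := by
          rw [hh, Finset.sum_sub_distrib, sub_div]
        rw [hdiff, abs_div, abs_of_pos hQ0, div_le_iff₀ hQ0]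
        calc |∑ a, (g (Fin.cons a y) - g (Fin.cons a z))|
            ≤ ∑ a, |g (Fin.cons a y) - g (Fin.cons a z)| := Finset.abs_sum_le_sum_abs _ _
          _ ≤ ∑ _a : A, c j.succ := by
              apply Finset.sum_le_sum
              intro a _
              apply hg j.succ
              intro l hl
              cases' l using Fin.cases with l'
              · simp
              · simp only [Fin.cons_succ]
                apply hyz
                intro hc
                exact hl (by rw [hc])
          _ = c j.succ * Q := by
              rw [Finset.sum_const, card_univ, nsmul_eq_mul, hQdef]
              ring
      have hc0 : 0 ≤ c 0 := by
        have := hg 0 (fun _ => Classical.arbitrary A) (fun _ => Classical.arbitrary A)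
          (fun _ _ => rfl)
        simpa using this
      have key : ∀ y : Fin N → A,
          ∑ a, Real.exp (t * (g (Fin.cons a y) - h y))
            ≤ Q * Real.exp (t ^ 2 * (c 0) ^ 2 / 2) := by
        intro y
        apply sum_exp_le _ _ _ hc0
        · intro a b
          have : g (Fin.cons a y) - h y - (g (Fin.cons b y) - h y)
              = g (Fin.cons a y) - g (Fin.cons b y) := by ring
          rw [this]
          apply hg 0
          intro l hl
          cases' l using Fin.cases with l'
          · exact absurd rfl hl
          · simp
        · rw [Finset.sum_sub_distrib, Finset.sum_const, card_univ, nsmul_eq_mul, hh]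
          field_simp
          simp [hQdef]
      calc ∑ x, Real.exp (t * (g x - μ))
          = ∑ y : Fin N → A, ∑ a : A, Real.exp (t * (g (Fin.cons a y) - μ)) := hsplit _
        _ = ∑ y : Fin N → A, (∑ a : A, Real.exp (t * (g (Fin.cons a y) - h y)))
              * Real.exp (t * (h y - μ)) := by
            apply Finset.sum_congr rfl
            intro y _
            rw [Finset.sum_mul]
            apply Finset.sum_congr rfl
            intro a _
            rw [← Real.exp_add]
            congr 1
            ring
        _ ≤ ∑ y : Fin N → A, (Q * Real.exp (t ^ 2 * (c 0) ^ 2 / 2))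
              * Real.exp (t * (h y - μ)) := by
            apply Finset.sum_le_sum
            intro y _
            exact mul_le_mul_of_nonneg_right (key y) (Real.exp_pos _).le
        _ = (Q * Real.exp (t ^ 2 * (c 0) ^ 2 / 2)) *
              ∑ y : Fin N → A, Real.exp (t * (h y - (∑ z, h z) /
                (Fintype.card (Fin N → A) : ℝ))) := by
            rw [Finset.mul_sum]
            apply Finset.sum_congr rfl
            intro y _
            rw [hμ]
        _ ≤ (Q * Real.exp (t ^ 2 * (c 0) ^ 2 / 2)) *
              ((Fintype.card (Fin N → A) : ℝ) *
                Real.exp (t ^ 2 * (∑ j : Fin N, c j.succ ^ 2) / 2)) := by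
            apply mul_le_mul_of_nonneg_left (ih h (fun j => c j.succ) hhdiff t)
            positivity
        _ = (Fintype.card (Fin (N+1) → A) : ℝ) * Real.exp (t ^ 2 * (∑ i, c i ^ 2) / 2) := by
            rw [hcard, Fin.sum_univ_succ]
            have hee : Real.exp (t ^ 2 * (c 0 ^ 2 + ∑ j : Fin N, c j.succ ^ 2) / 2)
                = Real.exp (t ^ 2 * c 0 ^ 2 / 2) *
                  Real.exp (t ^ 2 * (∑ j : Fin N, c j.succ ^ 2) / 2) := by
              rw [← Real.exp_add]
              ring_nf
            rw [hee]
            ring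

lemma mcdiarmid_mgf' {ι A : Type} [DecidableEq ι] [Fintype ι] [Fintype A] [Nonempty A]
    (g : (ι → A) → ℝ) (c : ι → ℝ)
    (hg : ∀ (i : ι) (x y : ι → A), (∀ j, j ≠ i → x j = y j) → |g x - g y| ≤ c i)
    (t : ℝ) :
    ∑ x, Real.exp (t * (g x - (∑ z, g z) / (Fintype.card (ι → A) : ℝ))) ≤
      (Fintype.card (ι → A) : ℝ) * Real.exp (t ^ 2 * (∑ i, c i ^ 2) / 2) := by
  set N := Fintype.card ι with hN
  set e : ι ≃ Fin N := Fintype.equivFin ι with he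
  set E : (ι → A) ≃ (Fin N → A) := Equiv.arrowCongr e (Equiv.refl A) with hE
  set g' : (Fin N → A) → ℝ := fun x => g (E.symm x) with hg'
  set c' : Fin N → ℝ := fun i => c (e.symm i) with hc'
  have hgd : ∀ (i : Fin N) (x y : Fin N → A),
      (∀ j, j ≠ i → x j = y j) → |g' x - g' y| ≤ c' i := by
    intro i x y hxy
    apply hg (e.symm i)
    intro j hj
    show x (e j) = y (e j)
    apply hxy
    intro hc
    exact hj (by rw [← hc, Equiv.symm_apply_apply])
  have h1 : ∑ z : ι → A, g z = ∑ z : Fin N → A, g' z := (E.symm.sum_comp g).symm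
  have h4 : Fintype.card (ι → A) = Fintype.card (Fin N → A) := Fintype.card_congr E
  have h3 : ∑ i : ι, c i ^ 2 = ∑ i : Fin N, c' i ^ 2 :=
    (e.symm.sum_comp (fun i => c i ^ 2)).symm
  have h2 : ∑ x : ι → A, Real.exp (t * (g x - (∑ z, g z) / (Fintype.card (ι → A) : ℝ)))
      = ∑ x : Fin N → A,
          Real.exp (t * (g' x - (∑ z, g' z) / (Fintype.card (Fin N → A) : ℝ))) := by
    rw [h1, h4]
    exact (E.symm.sum_comp
      (fun x => Real.exp (t * (g x -
        (∑ z : Fin N → A, g' z) / (Fintype.card (Fin N → A) : ℝ))))).symm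
  rw [h2, h3, h4]
  exact mcdiarmid_mgf N g' c' hgd t

lemma one_sided {ι A : Type} [DecidableEq ι] [Fintype ι] [Fintype A] [Nonempty A]
    (g : (ι → A) → ℝ) (c : ι → ℝ)
    (hg : ∀ (i : ι) (x y : ι → A), (∀ j, j ≠ i → x j = y j) → |g x - g y| ≤ c i)
    (ε : ℝ) (hε : 0 < ε) (C : ℝ) (hC : C = ∑ i, c i ^ 2) (hC0 : 0 < C) :
    ((univ.filter (fun x : ι → A =>
        ε ≤ g x - (∑ z, g z) / (Fintype.card (ι → A) : ℝ))).card : ℝ)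
      ≤ Real.exp (-(ε ^ 2 / (2 * C))) * (Fintype.card (ι → A) : ℝ) := by
  set μ : ℝ := (∑ z, g z) / (Fintype.card (ι → A) : ℝ) with hμ
  set t : ℝ := ε / C with ht
  have ht0 : 0 < t := by positivity
  set P := univ.filter (fun x : ι → A => ε ≤ g x - μ) with hP
  have step1 : (P.card : ℝ) * Real.exp (t * ε) ≤ ∑ x, Real.exp (t * (g x - μ)) := by
    calc (P.card : ℝ) * Real.exp (t * ε) = ∑ _x ∈ P, Real.exp (t * ε) := by
          rw [Finset.sum_const, nsmul_eq_mul]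
      _ ≤ ∑ x ∈ P, Real.exp (t * (g x - μ)) := by
          apply Finset.sum_le_sum
          intro x hx
          apply Real.exp_le_exp.mpr
          have := (Finset.mem_filter.mp hx).2
          nlinarith
      _ ≤ ∑ x, Real.exp (t * (g x - μ)) := by
          apply Finset.sum_le_sum_of_subset_of_nonneg (Finset.filter_subset _ _)
          intro x _ _
          exact (Real.exp_pos _).le
  have step2 := mcdiarmid_mgf' g c hg t
  rw [← hC] at step2
  have key : (P.card : ℝ) * Real.exp (t * ε)
      ≤ (Fintype.card (ι → A) : ℝ) * Real.exp (t ^ 2 * C / 2) := le_trans step1 step2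
  have hexp : Real.exp (t ^ 2 * C / 2) = Real.exp (-(ε ^ 2 / (2 * C))) * Real.exp (t * ε) := by
    rw [← Real.exp_add]
    congr 1
    rw [ht]
    field_simp
    ring
  rw [hexp, ← mul_assoc,
    mul_comm (Fintype.card (ι → A) : ℝ) (Real.exp (-(ε ^ 2 / (2 * C))))] at key
  exact le_of_mul_le_mul_right key (Real.exp_pos _)

lemma mcdiarmid_tail {ι A : Type} [DecidableEq ι] [Fintype ι] [Fintype A] [Nonempty A]
    (g : (ι → A) → ℝ) (c : ι → ℝ)
    (hg : ∀ (i : ι) (x y : ι → A), (∀ j, j ≠ i → x j = y j) → |g x - g y| ≤ c i)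
    (ε : ℝ) (hε : 0 < ε) (C : ℝ) (hC : C = ∑ i, c i ^ 2) (hC0 : 0 < C) :
    ((univ.filter (fun x : ι → A =>
        ε ≤ |g x - (∑ z, g z) / (Fintype.card (ι → A) : ℝ)|)).card : ℝ)
      ≤ 2 * Real.exp (-(ε ^ 2 / (2 * C))) * (Fintype.card (ι → A) : ℝ) := by
  set μ : ℝ := (∑ z, g z) / (Fintype.card (ι → A) : ℝ) with hμ
  have hup := one_sided g c hg ε hε C hC hC0
  have hgneg : ∀ (i : ι) (x y : ι → A), (∀ j, j ≠ i → x j = y j)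
      → |(fun z => -g z) x - (fun z => -g z) y| ≤ c i := by
    intro i x y hxy
    simp only
    rw [show -g x - -g y = -(g x - g y) by ring, abs_neg]
    exact hg i x y hxy
  have hdown := one_sided (fun z => -g z) c hgneg ε hε C hC hC0
  have hμneg : (∑ z : ι → A, -g z) / (Fintype.card (ι → A) : ℝ) = -μ := by
    rw [Finset.sum_neg_distrib, hμ, neg_div]
  rw [hμneg] at hdown
  have hsub : univ.filter (fun x : ι → A => ε ≤ |g x - μ|) ⊆
      (univ.filter (fun x : ι → A => ε ≤ g x - μ)) ∪
      (univ.filter (fun x : ι → A => ε ≤ -g x - -μ)) := by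
    intro x hx
    have hx' := (Finset.mem_filter.mp hx).2
    rcases le_abs.mp hx' with h | h
    · exact Finset.mem_union_left _ (Finset.mem_filter.mpr ⟨Finset.mem_univ _, h⟩)
    · refine Finset.mem_union_right _ (Finset.mem_filter.mpr ⟨Finset.mem_univ _, ?_⟩)
      linarith
  calc ((univ.filter (fun x : ι → A => ε ≤ |g x - μ|)).card : ℝ)
      ≤ (((univ.filter (fun x : ι → A => ε ≤ g x - μ)) ∪
          (univ.filter (fun x : ι → A => ε ≤ -g x - -μ))).card : ℝ) := by
        exact_mod_cast Finset.card_le_card hsub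
    _ ≤ ((univ.filter (fun x : ι → A => ε ≤ g x - μ)).card : ℝ)
        + ((univ.filter (fun x : ι → A => ε ≤ -g x - -μ)).card : ℝ) := by
        exact_mod_cast Finset.card_union_le _ _
    _ ≤ Real.exp (-(ε ^ 2 / (2 * C))) * (Fintype.card (ι → A) : ℝ)
        + Real.exp (-(ε ^ 2 / (2 * C))) * (Fintype.card (ι → A) : ℝ) := by
        exact add_le_add hup hdown
    _ = 2 * Real.exp (-(ε ^ 2 / (2 * C))) * (Fintype.card (ι → A) : ℝ) := by ring

lemma natCard_subtype {α : Type} [Fintype α] (p : α → Prop) [DecidablePred p] :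
    Nat.card {x // p x} = (univ.filter p).card := by
  rw [Nat.card_eq_fintype_card, Fintype.card_subtype]

noncomputable def splitEquiv {I X B : Type} (x : I → X) :
    (I × X → B) ≃ ((I → B) × ({p : I × X // p.2 ≠ x p.1} → B)) where
  toFun F := (fun i => F (i, x i), fun p => F p.1)
  invFun q := fun p => if h : p.2 = x p.1 then q.1 p.1 else q.2 ⟨p, h⟩
  left_inv F := by
    funext p
    dsimp only
    by_cases h : p.2 = x p.1
    · rw [dif_pos h, show (p.1, x p.1) = p from by rw [← h]]
    · rw [dif_neg h]
  right_inv q := by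
    refine Prod.ext ?_ ?_ <;> dsimp only
    · funext i
      rw [dif_pos rfl]
    · funext p
      rw [dif_neg p.2]

noncomputable def subtypeProdEquiv {β ρ : Type} (pS : β → Prop) :
    {q : β × ρ // pS q.1} ≃ ({b : β // pS b} × ρ) where
  toFun q := (⟨q.1.1, q.2⟩, q.1.2)
  invFun r := ⟨(r.1.1, r.2), r.1.2⟩
  left_inv _ := rfl
  right_inv _ := rfl

lemma card_filter_diff_le {α : Type} [Fintype α] (P P' T : α → Prop)
    [DecidablePred P] [DecidablePred P'] [DecidablePred T]
    (h : ∀ a, ¬ T a → (P a ↔ P' a)) :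
    |((univ.filter P).card : ℝ) - ((univ.filter P').card : ℝ)|
      ≤ ((univ.filter T).card : ℝ) := by
  have key : ∀ (R R' : α → Prop) [DecidablePred R] [DecidablePred R'],
      (∀ a, ¬ T a → (R a ↔ R' a)) →
      (univ.filter R).card ≤ (univ.filter R').card + (univ.filter T).card := by
    intro R R' _ _ hRR
    calc (univ.filter R).card ≤ ((univ.filter R') ∪ (univ.filter T)).card := by
          apply Finset.card_le_card
          intro a ha
          have haR := (Finset.mem_filter.mp ha).2
          by_cases hT : T a
          · exact Finset.mem_union_right _ (Finset.mem_filter.mpr ⟨Finset.mem_univ _, hT⟩)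
          · exact Finset.mem_union_left _
              (Finset.mem_filter.mpr ⟨Finset.mem_univ _, (hRR a hT).mp haR⟩)
      _ ≤ _ := Finset.card_union_le _ _
  have h1 := key P P' h
  have h2 := key P' P (fun a ha => (h a ha).symm)
  rw [abs_le]
  constructor
  · have : ((univ.filter P').card : ℝ) ≤ (univ.filter P).card + (univ.filter T).card := by
      exact_mod_cast h2
    linarith
  · have : ((univ.filter P).card : ℝ) ≤ (univ.filter P').card + (univ.filter T).card := by
      exact_mod_cast h1
    linarith

lemma count_eval {I X B : Type} [DecidableEq I] [DecidableEq X]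
    [Fintype I] [Fintype X] [Fintype B] [Nonempty B]
    (x : I → X) (S : Set (I → B)) :
    ((univ.filter (fun F : I × X → B => (fun i => F (i, x i)) ∈ S)).card : ℝ)
      = (Nat.card S : ℝ) * (Fintype.card (I × X → B) : ℝ)
        / (Fintype.card B : ℝ) ^ Fintype.card I := by
  have e1 : {F : I × X → B // (fun i => F (i, x i)) ∈ S}
      ≃ {q : (I → B) × ({p : I × X // p.2 ≠ x p.1} → B) // q.1 ∈ S} :=
    Equiv.subtypeEquiv (splitEquiv x) (fun F => Iff.rfl)
  have hcount : (univ.filter (fun F : I × X → B => (fun i => F (i, x i)) ∈ S)).card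
      = Nat.card S * Fintype.card ({p : I × X // p.2 ≠ x p.1} → B) := by
    rw [← Fintype.card_subtype]
    rw [Fintype.card_congr (e1.trans (subtypeProdEquiv (fun b : I → B => b ∈ S)))]
    rw [Fintype.card_prod]
    congr 1
    exact (Nat.card_eq_fintype_card).symm
  have hcardΩ : Fintype.card (I × X → B)
      = Fintype.card B ^ Fintype.card I * Fintype.card ({p : I × X // p.2 ≠ x p.1} → B) := by
    rw [Fintype.card_congr (splitEquiv x), Fintype.card_prod, Fintype.card_fun]
  have hB0 : (0:ℝ) < ((Fintype.card B : ℝ) ^ Fintype.card I) := by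
    have : (0:ℝ) < (Fintype.card B : ℝ) := by exact_mod_cast Fintype.card_pos
    positivity
  have hR0 : (0:ℝ) < (Fintype.card ({p : I × X // p.2 ≠ x p.1} → B) : ℝ) := by
    exact_mod_cast Fintype.card_pos
  rw [hcount, hcardΩ]
  push_cast
  field_simp

lemma constrained_count {n k : ℕ} {Sa : Type} [Fintype Sa]
    (r : Fin n → ZMod 2) (hr : (Finset.univ.filter (fun c => r c ≠ 0)).card = k)
    (x : Fin k → Sa) :
    (univ.filter (fun s : Fin n → Sa => (fun j => s (nbr r hr j)) = x)).card
      ≤ Fintype.card Sa ^ (n - k) := by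
  set D : Finset (Fin n) := Finset.univ.filter (fun c => r c ≠ 0) with hD
  have hinj : Set.InjOn (fun (s : Fin n → Sa) (j : {j // j ∈ Dᶜ}) => s j.1)
      (univ.filter (fun s : Fin n → Sa => (fun j => s (nbr r hr j)) = x)) := by
    intro s hs s' hs' hres
    have hsx : (fun j => s (nbr r hr j)) = x := (Finset.mem_filter.mp hs).2
    have hsx' : (fun j => s' (nbr r hr j)) = x := (Finset.mem_filter.mp hs').2
    funext j
    by_cases hj : j ∈ D
    · set j₀ := (D.orderIsoOfFin hr).symm ⟨j, hj⟩ with hj₀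
      have hjj : nbr r hr j₀ = j := by
        show ((D.orderIsoOfFin hr) ((D.orderIsoOfFin hr).symm ⟨j, hj⟩) : Fin n) = j
        rw [OrderIso.apply_symm_apply]
      calc s j = s (nbr r hr j₀) := by rw [hjj]
        _ = x j₀ := congrFun hsx j₀
        _ = s' (nbr r hr j₀) := (congrFun hsx' j₀).symm
        _ = s' j := by rw [hjj]
    · exact congrFun hres ⟨j, Finset.mem_compl.mpr hj⟩
  calc (univ.filter (fun s : Fin n → Sa => (fun j => s (nbr r hr j)) = x)).card
      ≤ (univ : Finset ({j // j ∈ Dᶜ} → Sa)).card :=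
        Finset.card_le_card_of_injOn _ (fun _ _ => Finset.mem_univ _) hinj
    _ = Fintype.card ({j // j ∈ Dᶜ} → Sa) := Finset.card_univ
    _ = Fintype.card Sa ^ (n - k) := by
        rw [Fintype.card_fun, Fintype.card_coe, Finset.card_compl, hD, hr, Fintype.card_fin]

end Stmt10Aux

open Stmt10Aux

/-- There is an absolute constant `c > 0` such that: for all
positive `n, m, k` with `k ≤ n`, every `(m,n,k)`-matrix `H`, all finite alphabets
`Σ, Γ` and every fixed subset `S ⊆ Γ^m`, if `f_1, …, f_m : Σ^k → Γ` are independent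
uniformly random functions, then with probability at least
`1 − 2·exp(−c·|Σ|^{4k/5}/m)` over `F = (f_1, …, f_m)` one has
`| Pr_{b ∼ P_{H,F}}[b ∈ S] − |S|/|Γ|^m | < |Σ|^{−k/10}`, where `P_{H,F}` draws
`s ∈ Σ^n` uniformly and sets `b_i = f_i(s_{N_H(i,1)}, …, s_{N_H(i,k)})`. -/
theorem stmt10 : ∃ c : ℝ, 0 < c ∧
    ∀ (n m k : ℕ), 0 < n → 0 < m → 0 < k → k ≤ n →
    ∀ (H : Fin m → Fin n → ZMod 2)
      (hH : ∀ i, (Finset.univ.filter (fun j => H i j ≠ 0)).card = k)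
      (Sa Γa : Type) [Fintype Sa] [Fintype Γa] [Nonempty Sa] [Nonempty Γa]
      (S : Set (Fin m → Γa)),
      1 - 2 * Real.exp (-(c * (Fintype.card Sa : ℝ) ^ ((4 * (k : ℝ)) / 5) / (m : ℝ))) ≤
        (Nat.card {f : Fin m → (Fin k → Sa) → Γa //
            |(Nat.card {s : Fin n → Sa //
                  (fun i => f i (fun j => s (nbr (H i) (hH i) j))) ∈ S} : ℝ) /
                (Nat.card (Fin n → Sa) : ℝ) -
              (Nat.card S : ℝ) / (Fintype.card Γa : ℝ) ^ m| <
              (Fintype.card Sa : ℝ) ^ (-(k : ℝ) / 10)} : ℝ) /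
          (Nat.card (Fin m → (Fin k → Sa) → Γa) : ℝ) := by
  refine ⟨1/2, by norm_num, ?_⟩
  intro n m k hn hm hk hkn H hH Sa Γa _ _ _ _ S
  classical
  -- basic positivity facts
  have hQs1 : (1:ℝ) ≤ (Fintype.card Sa : ℝ) := by exact_mod_cast Fintype.card_pos
  have hQs0 : (0:ℝ) < (Fintype.card Sa : ℝ) := lt_of_lt_of_le one_pos hQs1
  have hQΓ0 : (0:ℝ) < (Fintype.card Γa : ℝ) := by exact_mod_cast Fintype.card_pos
  have hQn0 : (0:ℝ) < (Fintype.card (Fin n → Sa) : ℝ) := by exact_mod_cast Fintype.card_pos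
  have hΩ0 : (0:ℝ) < (Fintype.card (Fin m × (Fin k → Sa) → Γa) : ℝ) := by
    exact_mod_cast Fintype.card_pos
  have hm0 : (0:ℝ) < (m:ℝ) := by exact_mod_cast hm
  have hQnval : (Fintype.card (Fin n → Sa) : ℝ) = (Fintype.card Sa : ℝ) ^ n := by
    rw [Fintype.card_fun, Fintype.card_fin]; push_cast; ring
  -- the empirical probability as a function of the uncurried random tuple F
  set g : (Fin m × (Fin k → Sa) → Γa) → ℝ := fun F =>
    ((Nat.card {s : Fin n → Sa //
        (fun i => F (i, fun j => s (nbr (H i) (hH i) j))) ∈ S} : ℝ)) /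
      (Nat.card (Fin n → Sa) : ℝ) with hgdef
  have gfilter : ∀ F, g F =
      ((univ.filter (fun s : Fin n → Sa =>
        (fun i => F (i, fun j => s (nbr (H i) (hH i) j))) ∈ S)).card : ℝ) /
      (Fintype.card (Fin n → Sa) : ℝ) := by
    intro F
    simp only [hgdef]
    rw [natCard_subtype, Nat.card_eq_fintype_card]
  set μ : ℝ := (∑ z, g z) / (Fintype.card (Fin m × (Fin k → Sa) → Γa) : ℝ) with hμdef
  -- per-point counting
  have per_s : ∀ s : Fin n → Sa,
      ((univ.filter (fun F : Fin m × (Fin k → Sa) → Γa =>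
          (fun i => F (i, fun j => s (nbr (H i) (hH i) j))) ∈ S)).card : ℝ)
        = (Nat.card S : ℝ) * (Fintype.card (Fin m × (Fin k → Sa) → Γa) : ℝ)
          / (Fintype.card Γa : ℝ) ^ m := by
    intro s
    have := count_eval (fun (i : Fin m) (j : Fin k) => s (nbr (H i) (hH i) j)) S
    rw [Fintype.card_fin] at this
    exact this
  -- the mean of g is |S|/|Γ|^m
  have hmean : μ = (Nat.card S : ℝ) / (Fintype.card Γa : ℝ) ^ m := by
    have swap : ∑ F : Fin m × (Fin k → Sa) → Γa,
        ((univ.filter (fun s : Fin n → Sa =>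
          (fun i => F (i, fun j => s (nbr (H i) (hH i) j))) ∈ S)).card : ℝ)
        = ∑ s : Fin n → Sa,
          ((univ.filter (fun F : Fin m × (Fin k → Sa) → Γa =>
            (fun i => F (i, fun j => s (nbr (H i) (hH i) j))) ∈ S)).card : ℝ) := by
      simp_rw [Finset.card_filter]
      push_cast
      rw [Finset.sum_comm]
    have hsum : ∑ z, g z = (Fintype.card (Fin n → Sa) : ℝ) *
        ((Nat.card S : ℝ) * (Fintype.card (Fin m × (Fin k → Sa) → Γa) : ℝ)
          / (Fintype.card Γa : ℝ) ^ m)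
        / (Fintype.card (Fin n → Sa) : ℝ) := by
      calc ∑ z, g z
          = (∑ F : Fin m × (Fin k → Sa) → Γa,
              ((univ.filter (fun s : Fin n → Sa =>
                (fun i => F (i, fun j => s (nbr (H i) (hH i) j))) ∈ S)).card : ℝ))
            / (Fintype.card (Fin n → Sa) : ℝ) := by
            refine (Finset.sum_congr rfl (fun F _ => gfilter F)).trans ?_
            rw [← Finset.sum_div]
        _ = (∑ s : Fin n → Sa,
              ((univ.filter (fun F : Fin m × (Fin k → Sa) → Γa =>
                (fun i => F (i, fun j => s (nbr (H i) (hH i) j))) ∈ S)).card : ℝ))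
            / (Fintype.card (Fin n → Sa) : ℝ) := by rw [swap]
        _ = _ := by
            rw [Finset.sum_congr rfl (fun s _ => per_s s), Finset.sum_const, card_univ,
              nsmul_eq_mul]
    rw [hμdef, hsum]
    field_simp
  -- bounded differences
  have hdiffbd : ∀ (i : Fin m × (Fin k → Sa)) (F F' : Fin m × (Fin k → Sa) → Γa),
      (∀ j, j ≠ i → F j = F' j) →
      |g F - g F'| ≤ (((Fintype.card Sa : ℝ)) ^ k)⁻¹ := by
    intro i F F' hFF
    have hiff : ∀ s : Fin n → Sa, ¬ ((fun j => s (nbr (H i.1) (hH i.1) j)) = i.2) →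
        ((fun i' => F (i', fun j => s (nbr (H i') (hH i') j))) ∈ S ↔
         (fun i' => F' (i', fun j => s (nbr (H i') (hH i') j))) ∈ S) := by
      intro s hs
      have heq : (fun i' => F (i', fun j => s (nbr (H i') (hH i') j)))
          = (fun i' => F' (i', fun j => s (nbr (H i') (hH i') j))) := by
        funext i'
        apply hFF
        intro hc
        apply hs
        have h1 := congrArg Prod.fst hc
        have h2 := congrArg Prod.snd hc
        simp only at h1 h2
        subst h1
        exact h2
      rw [heq]
    have habs := card_filter_diff_le
      (fun s : Fin n → Sa => (fun i' => F (i', fun j => s (nbr (H i') (hH i') j))) ∈ S)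
      (fun s : Fin n → Sa => (fun i' => F' (i', fun j => s (nbr (H i') (hH i') j))) ∈ S)
      (fun s : Fin n → Sa => (fun j => s (nbr (H i.1) (hH i.1) j)) = i.2)
      hiff
    have hT := constrained_count (H i.1) (hH i.1) i.2
    have hTr : ((univ.filter (fun s : Fin n → Sa =>
        (fun j => s (nbr (H i.1) (hH i.1) j)) = i.2)).card : ℝ)
        ≤ (Fintype.card Sa : ℝ) ^ (n - k) := by exact_mod_cast hT
    rw [gfilter F, gfilter F', div_sub_div_same, abs_div, abs_of_pos hQn0,
      div_le_iff₀ hQn0]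
    calc |((univ.filter (fun s : Fin n → Sa =>
            (fun i' => F (i', fun j => s (nbr (H i') (hH i') j))) ∈ S)).card : ℝ) -
          ((univ.filter (fun s : Fin n → Sa =>
            (fun i' => F' (i', fun j => s (nbr (H i') (hH i') j))) ∈ S)).card : ℝ)|
        ≤ ((univ.filter (fun s : Fin n → Sa =>
            (fun j => s (nbr (H i.1) (hH i.1) j)) = i.2)).card : ℝ) := habs
      _ ≤ (Fintype.card Sa : ℝ) ^ (n - k) := hTr
      _ = (((Fintype.card Sa : ℝ)) ^ k)⁻¹ * (Fintype.card (Fin n → Sa) : ℝ) := by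
          have hk0 : ((Fintype.card Sa : ℝ)) ^ k ≠ 0 := by positivity
          have hsplitpow : (Fintype.card Sa : ℝ) ^ n
              = (Fintype.card Sa : ℝ) ^ (n - k) * (Fintype.card Sa : ℝ) ^ k := by
            rw [← pow_add, Nat.sub_add_cancel hkn]
          rw [hQnval, hsplitpow]
          field_simp
  -- McDiarmid tail bound
  set ε : ℝ := (Fintype.card Sa : ℝ) ^ (-(k : ℝ) / 10) with hεdef
  have hε0 : 0 < ε := Real.rpow_pos_of_pos hQs0 _
  set C : ℝ := (m : ℝ) / ((Fintype.card Sa : ℝ) ^ k) with hCdef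
  have hC0 : 0 < C := by positivity
  have hCsum : C = ∑ _i : Fin m × (Fin k → Sa), ((((Fintype.card Sa : ℝ)) ^ k)⁻¹) ^ 2 := by
    rw [Finset.sum_const, card_univ, Fintype.card_prod, Fintype.card_fin,
      Fintype.card_fun, Fintype.card_fin, nsmul_eq_mul, hCdef]
    have hk0 : ((Fintype.card Sa : ℝ)) ^ k ≠ 0 := by positivity
    push_cast
    field_simp
  have htail := mcdiarmid_tail g (fun _ => (((Fintype.card Sa : ℝ)) ^ k)⁻¹) hdiffbd
    ε hε0 C hCsum hC0
  rw [← hμdef] at htail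
  -- exponent arithmetic
  have hexpeq : -(ε ^ 2 / (2 * C))
      = -(1/2 * (Fintype.card Sa : ℝ) ^ ((4 * (k : ℝ)) / 5) / (m : ℝ)) := by
    have hε2 : ε ^ 2 = (Fintype.card Sa : ℝ) ^ (-(k:ℝ)/5) := by
      rw [hεdef, ← Real.rpow_natCast ((Fintype.card Sa : ℝ) ^ (-(k : ℝ) / 10)) 2,
        ← Real.rpow_mul hQs0.le]
      congr 1
      ring
    have hk' : ((Fintype.card Sa : ℝ)) ^ k = (Fintype.card Sa : ℝ) ^ (k:ℝ) :=
      (Real.rpow_natCast _ k).symm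
    have hcomb : (Fintype.card Sa : ℝ) ^ (-(k:ℝ)/5) * (Fintype.card Sa : ℝ) ^ ((k:ℝ))
        = (Fintype.card Sa : ℝ) ^ ((4 * (k : ℝ)) / 5) := by
      rw [← Real.rpow_add hQs0]
      congr 1
      ring
    have hQsK0 : (0:ℝ) < (Fintype.card Sa : ℝ) ^ ((k:ℝ)) := Real.rpow_pos_of_pos hQs0 _
    rw [neg_inj, hε2, hCdef, hk', ← hcomb]
    field_simp
  rw [hexpeq] at htail
  -- good/bad decomposition
  have hgoodbad : ((univ.filter (fun F : Fin m × (Fin k → Sa) → Γa =>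
        |g F - μ| < ε)).card : ℝ)
      = (Fintype.card (Fin m × (Fin k → Sa) → Γa) : ℝ)
        - ((univ.filter (fun F : Fin m × (Fin k → Sa) → Γa => ε ≤ |g F - μ|)).card : ℝ) := by
    have hsplit := Finset.card_filter_add_card_filter_not
      (s := (univ : Finset (Fin m × (Fin k → Sa) → Γa)))
      (p := fun F => |g F - μ| < ε)
    simp only [not_lt] at hsplit
    rw [Finset.card_univ] at hsplit
    have := congrArg (fun x : ℕ => (x : ℝ)) hsplit
    push_cast at this
    linarith
  have hfinal : 1 - 2 * Real.exp
      (-(1/2 * (Fintype.card Sa : ℝ) ^ ((4 * (k : ℝ)) / 5) / (m : ℝ)))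
      ≤ ((univ.filter (fun F : Fin m × (Fin k → Sa) → Γa => |g F - μ| < ε)).card : ℝ)
        / (Fintype.card (Fin m × (Fin k → Sa) → Γa) : ℝ) := by
    rw [hgoodbad, le_div_iff₀ hΩ0]
    nlinarith [htail, hΩ0]
  -- translate the goal into the filtered count
  have hiffpred : ∀ F : Fin m × (Fin k → Sa) → Γa,
      (|g F - μ| < ε) ↔
      |(Nat.card {s : Fin n → Sa //
            (fun i => (Equiv.curry (Fin m) (Fin k → Sa) Γa F) i (fun j => s (nbr (H i) (hH i) j))) ∈ S} : ℝ) /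
          (Nat.card (Fin n → Sa) : ℝ) -
        (Nat.card S : ℝ) / (Fintype.card Γa : ℝ) ^ m| <
        (Fintype.card Sa : ℝ) ^ (-(k : ℝ) / 10) := by
    intro F
    rw [← hεdef, ← hmean]
    exact Iff.rfl
  have hNum : (Nat.card {f : Fin m → (Fin k → Sa) → Γa //
      |(Nat.card {s : Fin n → Sa //
            (fun i => f i (fun j => s (nbr (H i) (hH i) j))) ∈ S} : ℝ) /
          (Nat.card (Fin n → Sa) : ℝ) -
        (Nat.card S : ℝ) / (Fintype.card Γa : ℝ) ^ m| <
        (Fintype.card Sa : ℝ) ^ (-(k : ℝ) / 10)})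
      = (univ.filter (fun F : Fin m × (Fin k → Sa) → Γa => |g F - μ| < ε)).card := by
    rw [← natCard_subtype]
    exact Nat.card_congr
      (Equiv.subtypeEquiv (Equiv.curry (Fin m) (Fin k → Sa) Γa) hiffpred).symm
  have hDen : Nat.card (Fin m → (Fin k → Sa) → Γa)
      = Fintype.card (Fin m × (Fin k → Sa) → Γa) := by
    rw [Nat.card_congr (Equiv.curry (Fin m) (Fin k → Sa) Γa).symm,
      Nat.card_eq_fintype_card]
  rw [hNum, hDen]
  exact hfinal
end

section
/- Let m' be a positive integer, let p ∈ (0, 1), let Q be the distribution on {0,1}^{m'} whose coordinates are i.i.d. Bernoulli(p), and let P be any distribution on {0,1}^{m'}. Define φ(0) = −√(p/(1−p)) and φ(1) = √((1−p)/p), and write Y^φ for the vector obtained by applying φ to each coordinate of Y. For an integer 1 ≤ D ≤ m', let c be the real vector indexed by the nonempty subsets S ⊆ [m'] with |S| ≤ D, given by c_S = E_{Y∼P}[ ∏_{i∈S} φ(Y_i) ]. Then the supremum, over all real multilinear polynomials g in m' variables of degree at most D satisfying E_{Y∼Q}[g(Y^φ)] = 0 and E_{Y∼Q}[g(Y^φ)^2]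 > 0, of E_{Y∼P}[g(Y^φ)] / √(E_{Y∼Q}[g(Y^φ)^2]) equals ‖c‖_2 (the Euclidean norm of c). In particular, if ‖c‖_2 ≤ ε then every such g has E_{Y∼P}[g(Y^φ)] / √(E_{Y∼Q}[g(Y^φ)^2]) ≤ ε. -/
open Finset

/-- The normalization map: `φ(0) = −√(p/(1−p))`, `φ(1) = √((1−p)/p)`. -/
noncomputable def phiB (p : ℝ) : Bool → ℝ :=
  fun b => if b then Real.sqrt ((1 - p) / p) else -Real.sqrt (p / (1 - p))

/-- Mass function of `Q`: the coordinates are i.i.d. `Bernoulli(p)`. -/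
noncomputable def qMass (m' : ℕ) (p : ℝ) (y : Fin m' → Bool) : ℝ :=
  ∏ i, if y i then p else 1 - p

/-- The multilinear polynomial with coefficient vector `g` (indexed by subsets of
the variables; its degree is at most `D` iff `g S = 0` whenever `|S| > D`),
evaluated at the normalized vector `Y^φ = (φ(y_i))_i`. -/
noncomputable def gEval (m' : ℕ) (p : ℝ) (g : Finset (Fin m') → ℝ)
    (y : Fin m' → Bool) : ℝ :=
  ∑ S : Finset (Fin m'), g S * ∏ i ∈ S, phiB p (y i)

/-- `E_{Y∼Q}[g(Y^φ)]`. -/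
noncomputable def EQval (m' : ℕ) (p : ℝ) (g : Finset (Fin m') → ℝ) : ℝ :=
  ∑ y : Fin m' → Bool, qMass m' p y * gEval m' p g y

/-- `E_{Y∼Q}[g(Y^φ)²]`. -/
noncomputable def EQsq (m' : ℕ) (p : ℝ) (g : Finset (Fin m') → ℝ) : ℝ :=
  ∑ y : Fin m' → Bool, qMass m' p y * (gEval m' p g y) ^ 2

/-- `E_{Y∼P}[g(Y^φ)]` for a distribution with mass function `Pm`. -/
noncomputable def EPval (m' : ℕ) (p : ℝ) (Pm : (Fin m' → Bool) → ℝ)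
    (g : Finset (Fin m') → ℝ) : ℝ :=
  ∑ y : Fin m' → Bool, Pm y * gEval m' p g y

open scoped Classical in
/-- The vector `c`, indexed by nonempty subsets `S` of size at most `D`, with
`c_S = E_{Y∼P}[∏_{i∈S} φ(Y_i)]`; `cNorm` is its Euclidean norm. -/
noncomputable def cNorm (m' : ℕ) (p : ℝ) (Pm : (Fin m' → Bool) → ℝ) (D : ℕ) : ℝ :=
  Real.sqrt (∑ S ∈ Finset.univ.filter
      (fun S : Finset (Fin m') => S.Nonempty ∧ S.card ≤ D),
    (∑ y : Fin m' → Bool, Pm y * ∏ i ∈ S, phiB p (y i)) ^ 2)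

open scoped Classical

lemma phiB_true (p : ℝ) : phiB p true = Real.sqrt ((1-p)/p) := by simp [phiB]
lemma phiB_false (p : ℝ) : phiB p false = -Real.sqrt (p/(1-p)) := by simp [phiB]

lemma phi_sum (p : ℝ) (hp0 : 0 < p) (hp1 : p < 1) :
    p * phiB p true + (1 - p) * phiB p false = 0 := by
  have h1 : (0:ℝ) < 1 - p := by linarith
  have e1 : p * Real.sqrt ((1-p)/p) = Real.sqrt (p*(1-p)) := by
    rw [show p*(1-p) = p^2 * ((1-p)/p) by field_simp, Real.sqrt_mul (by positivity),
      Real.sqrt_sq hp0.le]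
  have e2 : (1-p) * Real.sqrt (p/(1-p)) = Real.sqrt (p*(1-p)) := by
    rw [show p*(1-p) = (1-p)^2 * (p/(1-p)) by field_simp, Real.sqrt_mul (by positivity),
      Real.sqrt_sq h1.le]
  rw [phiB_true, phiB_false, mul_neg, e1, e2]; ring

lemma phi_sq (p : ℝ) (hp0 : 0 < p) (hp1 : p < 1) :
    p * phiB p true ^ 2 + (1 - p) * phiB p false ^ 2 = 1 := by
  have h1 : (0:ℝ) < 1 - p := by linarith
  rw [phiB_true, phiB_false, neg_pow, Real.sq_sqrt (by positivity), Real.sq_sqrt (by positivity)]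
  field_simp
  ring
lemma ortho (m' : ℕ) (p : ℝ) (hp0 : 0 < p) (hp1 : p < 1) (S T : Finset (Fin m')) :
    ∑ y : Fin m' → Bool, qMass m' p y *
      ((∏ i ∈ S, phiB p (y i)) * ∏ i ∈ T, phiB p (y i))
      = if S = T then 1 else 0 := by
  have h1 : (0:ℝ) < 1 - p := by linarith
  have key : ∀ y : Fin m' → Bool, qMass m' p y *
      ((∏ i ∈ S, phiB p (y i)) * ∏ i ∈ T, phiB p (y i))
      = ∏ i, ((if y i then p else 1 - p) * ((if i ∈ S then phiB p (y i) else 1) *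
          (if i ∈ T then phiB p (y i) else 1))) := by
    intro y
    rw [show (∏ i ∈ S, phiB p (y i)) = ∏ i, (if i ∈ S then phiB p (y i) else 1) by
        rw [Finset.prod_ite_mem, Finset.univ_inter],
      show (∏ i ∈ T, phiB p (y i)) = ∏ i, (if i ∈ T then phiB p (y i) else 1) by
        rw [Finset.prod_ite_mem, Finset.univ_inter],
      qMass, ← Finset.prod_mul_distrib, ← Finset.prod_mul_distrib]
  simp_rw [key]
  rw [← Fintype.prod_sum (fun (i : Fin m') (b : Bool) =>
    ((if b then p else 1 - p) * ((if i ∈ S then phiB p b else 1) *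
      (if i ∈ T then phiB p b else 1))))]
  have factor : ∀ i : Fin m',
      (∑ b : Bool, ((if b then p else 1 - p) * ((if i ∈ S then phiB p b else 1) *
        (if i ∈ T then phiB p b else 1)))) = if (i ∈ S ↔ i ∈ T) then 1 else 0 := by
    intro i
    rw [Fintype.sum_bool]
    have hq := phi_sq p hp0 hp1
    have hs := phi_sum p hp0 hp1
    by_cases hS : i ∈ S <;> by_cases hT : i ∈ T <;>
      simp only [hS, hT, if_true, if_false, iff_true, iff_false, mul_one, one_mul,
        Bool.false_eq_true, iff_self, not_true, not_false_iff, if_neg, if_pos] <;>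
      nlinarith [hq, hs]
  rw [Finset.prod_congr rfl (fun i _ => factor i)]
  by_cases hST : S = T
  · subst hST; simp
  · rw [if_neg hST]
    obtain ⟨i, hi⟩ : ∃ i, ¬(i ∈ S ↔ i ∈ T) := by
      by_contra h; push_neg at h
      exact hST (Finset.ext h)
    exact Finset.prod_eq_zero (Finset.mem_univ i) (if_neg hi)
lemma ortho1 (m' : ℕ) (p : ℝ) (hp0 : 0 < p) (hp1 : p < 1) (S : Finset (Fin m')) :
    ∑ y : Fin m' → Bool, qMass m' p y * ∏ i ∈ S, phiB p (y i)
      = if S = ∅ then 1 else 0 := by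
  have := ortho m' p hp0 hp1 S ∅
  simpa using this

lemma EQval_eq (m' : ℕ) (p : ℝ) (hp0 : 0 < p) (hp1 : p < 1)
    (g : Finset (Fin m') → ℝ) : EQval m' p g = g ∅ := by
  rw [EQval]
  simp_rw [gEval, Finset.mul_sum]
  rw [Finset.sum_comm]
  have : ∀ S : Finset (Fin m'),
      (∑ y : Fin m' → Bool, qMass m' p y * (g S * ∏ i ∈ S, phiB p (y i)))
      = g S * if S = ∅ then 1 else 0 := by
    intro S
    rw [← ortho1 m' p hp0 hp1 S, Finset.mul_sum]
    congr 1; ext y; ring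
  simp_rw [this]
  simp

lemma EQsq_eq (m' : ℕ) (p : ℝ) (hp0 : 0 < p) (hp1 : p < 1)
    (g : Finset (Fin m') → ℝ) : EQsq m' p g = ∑ S : Finset (Fin m'), g S ^ 2 := by
  rw [EQsq]
  have expand : ∀ y, (gEval m' p g y) ^ 2 = ∑ S : Finset (Fin m'), ∑ T : Finset (Fin m'),
      (g S * g T) * ((∏ i ∈ S, phiB p (y i)) * ∏ i ∈ T, phiB p (y i)) := by
    intro y
    rw [gEval, sq, Finset.sum_mul_sum]
    congr 1; ext S; congr 1; ext T; ring
  simp_rw [expand, Finset.mul_sum]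
  rw [Finset.sum_comm]
  have : ∀ S : Finset (Fin m'), ∑ y : Fin m' → Bool, ∑ T : Finset (Fin m'),
      qMass m' p y * ((g S * g T) * ((∏ i ∈ S, phiB p (y i)) * ∏ i ∈ T, phiB p (y i)))
      = g S ^ 2 := by
    intro S
    rw [Finset.sum_comm]
    have inner : ∀ T : Finset (Fin m'), ∑ y : Fin m' → Bool,
        qMass m' p y * ((g S * g T) * ((∏ i ∈ S, phiB p (y i)) * ∏ i ∈ T, phiB p (y i)))
        = (g S * g T) * if S = T then 1 else 0 := by
      intro T
      rw [← ortho m' p hp0 hp1 S T, Finset.mul_sum]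
      congr 1; ext y; ring
    simp_rw [inner]
    simp [mul_ite, Finset.sum_ite_eq, sq]
  simp_rw [this]

lemma EPval_eq (m' : ℕ) (p : ℝ) (Pm : (Fin m' → Bool) → ℝ)
    (g : Finset (Fin m') → ℝ) :
    EPval m' p Pm g = ∑ S : Finset (Fin m'),
      g S * ∑ y : Fin m' → Bool, Pm y * ∏ i ∈ S, phiB p (y i) := by
  rw [EPval]
  simp_rw [gEval, Finset.mul_sum]
  rw [Finset.sum_comm]
  refine Finset.sum_congr rfl fun S _ => ?_
  exact Finset.sum_congr rfl fun y _ => by ring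
lemma ratio_le (m' : ℕ) (p : ℝ) (hp0 : 0 < p) (hp1 : p < 1)
    (Pm : (Fin m' → Bool) → ℝ) (D : ℕ)
    (g : Finset (Fin m') → ℝ)
    (hdeg : ∀ S : Finset (Fin m'), D < S.card → g S = 0)
    (h0 : EQval m' p g = 0) (hsq : 0 < EQsq m' p g) :
    EPval m' p Pm g / Real.sqrt (EQsq m' p g) ≤ cNorm m' p Pm D := by
  set F := Finset.univ.filter (fun S : Finset (Fin m') => S.Nonempty ∧ S.card ≤ D) with hF
  set cP : Finset (Fin m') → ℝ :=
    fun S => ∑ y : Fin m' → Bool, Pm y * ∏ i ∈ S, phiB p (y i) with hcP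
  have hg0 : g ∅ = 0 := by rwa [EQval_eq m' p hp0 hp1] at h0
  have hgout : ∀ S, S ∉ F → g S = 0 := by
    intro S hS
    simp only [hF, Finset.mem_filter, Finset.mem_univ, true_and, not_and, not_le] at hS
    by_cases hne : S.Nonempty
    · exact hdeg S (hS hne)
    · rw [Finset.not_nonempty_iff_eq_empty.mp hne]; exact hg0
  have hEP : EPval m' p Pm g = ∑ S ∈ F, g S * cP S := by
    rw [EPval_eq]
    exact (Finset.sum_subset (Finset.subset_univ F)
      (fun S _ hS => by rw [hgout S hS, zero_mul])).symm
  have hsq' : EQsq m' p g = ∑ S : Finset (Fin m'), g S ^ 2 := EQsq_eq m' p hp0 hp1 g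
  have hCS : ∑ S ∈ F, g S * cP S ≤
      Real.sqrt (∑ S ∈ F, g S ^ 2) * Real.sqrt (∑ S ∈ F, cP S ^ 2) :=
    Real.sum_mul_le_sqrt_mul_sqrt F _ _
  have hmono : Real.sqrt (∑ S ∈ F, g S ^ 2) ≤ Real.sqrt (EQsq m' p g) := by
    rw [hsq']
    exact Real.sqrt_le_sqrt (Finset.sum_le_sum_of_subset_of_nonneg (Finset.subset_univ F)
      (fun _ _ _ => sq_nonneg _))
  have hcnn : (0:ℝ) ≤ Real.sqrt (∑ S ∈ F, cP S ^ 2) := Real.sqrt_nonneg _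
  have hspos : 0 < Real.sqrt (EQsq m' p g) := Real.sqrt_pos.mpr hsq
  rw [div_le_iff₀ hspos, hEP]
  have hcn : cNorm m' p Pm D = Real.sqrt (∑ S ∈ F, cP S ^ 2) := rfl
  calc ∑ S ∈ F, g S * cP S ≤ _ := hCS
    _ ≤ Real.sqrt (∑ S ∈ F, cP S ^ 2) * Real.sqrt (EQsq m' p g) := by
        rw [mul_comm]; exact mul_le_mul_of_nonneg_left hmono hcnn
    _ = cNorm m' p Pm D * Real.sqrt (EQsq m' p g) := by rw [hcn]
/-- For `Q` with i.i.d. `Bernoulli(p)` coordinates and an arbitrary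
distribution `P` on `{0,1}^{m'}`, the supremum over all real multilinear
polynomials `g` of degree at most `D` with `E_Q[g(Y^φ)] = 0` and
`E_Q[g(Y^φ)²] > 0` of `E_P[g(Y^φ)] / √(E_Q[g(Y^φ)²])` equals `‖c‖₂`; in
particular if `‖c‖₂ ≤ ε` then every such `g` has ratio at most `ε`. -/
theorem stmt12 (m' : ℕ) (hm' : 0 < m') (p : ℝ) (hp0 : 0 < p) (hp1 : p < 1)
    (Pm : (Fin m' → Bool) → ℝ) (hPnn : ∀ y, 0 ≤ Pm y)
    (hPsum : ∑ y : Fin m' → Bool, Pm y = 1)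
    (D : ℕ) (hD1 : 1 ≤ D) (hDm : D ≤ m') :
    IsLUB
      {ratio : ℝ | ∃ g : Finset (Fin m') → ℝ,
        (∀ S : Finset (Fin m'), D < S.card → g S = 0) ∧
        EQval m' p g = 0 ∧ 0 < EQsq m' p g ∧
        ratio = EPval m' p Pm g / Real.sqrt (EQsq m' p g)}
      (cNorm m' p Pm D) ∧
    (∀ ε : ℝ, cNorm m' p Pm D ≤ ε →
      ∀ g : Finset (Fin m') → ℝ,
        (∀ S : Finset (Fin m'), D < S.card → g S = 0) →
        EQval m' p g = 0 → 0 < EQsq m' p g →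
        EPval m' p Pm g / Real.sqrt (EQsq m' p g) ≤ ε) := by
  set F := Finset.univ.filter (fun S : Finset (Fin m') => S.Nonempty ∧ S.card ≤ D) with hF
  set cP : Finset (Fin m') → ℝ :=
    fun S => ∑ y : Fin m' → Bool, Pm y * ∏ i ∈ S, phiB p (y i) with hcP
  set t : ℝ := ∑ S ∈ F, cP S ^ 2 with ht
  have hcn : cNorm m' p Pm D = Real.sqrt t := rfl
  have hub : ∀ g : Finset (Fin m') → ℝ,
      (∀ S : Finset (Fin m'), D < S.card → g S = 0) →
      EQval m' p g = 0 → 0 < EQsq m' p g →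
      EPval m' p Pm g / Real.sqrt (EQsq m' p g) ≤ cNorm m' p Pm D :=
    fun g h1 h2 h3 => ratio_le m' p hp0 hp1 Pm D g h1 h2 h3
  have hmem : cNorm m' p Pm D ∈
      {ratio : ℝ | ∃ g : Finset (Fin m') → ℝ,
        (∀ S : Finset (Fin m'), D < S.card → g S = 0) ∧
        EQval m' p g = 0 ∧ 0 < EQsq m' p g ∧
        ratio = EPval m' p Pm g / Real.sqrt (EQsq m' p g)} := by
    by_cases htz : t = 0
    · -- use an indicator of the singleton {0}
      set S0 : Finset (Fin m') := {⟨0, hm'⟩} with hS0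
      have hS0F : S0 ∈ F := by
        simp [hF, hS0, hD1]
      refine ⟨fun S => if S = S0 then 1 else 0, ?_, ?_, ?_, ?_⟩
      · intro S hcard
        show (if S = S0 then (1:ℝ) else 0) = 0
        rw [if_neg]
        rintro rfl
        simp [hS0] at hcard; omega
      · rw [EQval_eq m' p hp0 hp1]
        show (if (∅ : Finset (Fin m')) = S0 then (1:ℝ) else 0) = 0
        rw [if_neg (fun h => Finset.singleton_ne_empty _ (hS0 ▸ h.symm))]
      · rw [EQsq_eq m' p hp0 hp1]
        have : ∀ S : Finset (Fin m'), ((if S = S0 then (1:ℝ) else 0)) ^ 2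
            = if S = S0 then 1 else 0 := fun S => by split <;> norm_num
        simp_rw [this, Finset.sum_ite_eq' Finset.univ S0 (fun _ => (1:ℝ)),
          if_pos (Finset.mem_univ S0)]
        norm_num
      · have hEP : EPval m' p Pm (fun S => if S = S0 then 1 else 0) = cP S0 := by
          rw [EPval_eq]
          have : ∀ S : Finset (Fin m'),
              (if S = S0 then (1:ℝ) else 0) * cP S = if S = S0 then cP S0 else 0 := by
            intro S; split
            · next h => rw [h, one_mul]
            · rw [zero_mul]
          simp_rw [hcP] at this ⊢
          simp_rw [this]
          rw [Finset.sum_ite_eq' Finset.univ S0, if_pos (Finset.mem_univ S0)]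
        have hcP0 : cP S0 = 0 := by
          have hsum0 : ∑ S ∈ F, cP S ^ 2 = 0 := by rw [← ht]; exact htz
          have h2 := (Finset.sum_eq_zero_iff_of_nonneg
            (fun S _ => sq_nonneg (cP S))).mp hsum0 S0 hS0F
          exact pow_eq_zero_iff two_ne_zero |>.mp h2
        rw [hEP, hcP0, hcn, htz, zero_div, Real.sqrt_zero]
    · have htpos : 0 < t :=
        lt_of_le_of_ne (Finset.sum_nonneg fun S _ => sq_nonneg _) (Ne.symm htz)
      refine ⟨fun S => if S ∈ F then cP S else 0, ?_, ?_, ?_, ?_⟩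
      · intro S hcard
        show (if S ∈ F then cP S else 0) = 0
        rw [if_neg]
        simp only [hF, Finset.mem_filter, Finset.mem_univ, true_and, not_and, not_le]
        exact fun _ => hcard
      · rw [EQval_eq m' p hp0 hp1]
        show (if (∅ : Finset (Fin m')) ∈ F then cP ∅ else 0) = 0
        rw [if_neg]
        simp [hF]
      · rw [EQsq_eq m' p hp0 hp1]
        have : ∀ S : Finset (Fin m'), ((if S ∈ F then cP S else 0)) ^ 2
            = if S ∈ F then cP S ^ 2 else 0 := fun S => by split <;> norm_num
        simp_rw [this, Finset.sum_ite_mem, Finset.univ_inter]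
        exact htpos
      · have hEQ : EQsq m' p (fun S => if S ∈ F then cP S else 0) = t := by
          rw [EQsq_eq m' p hp0 hp1]
          have : ∀ S : Finset (Fin m'), ((if S ∈ F then cP S else 0)) ^ 2
              = if S ∈ F then cP S ^ 2 else 0 := fun S => by split <;> norm_num
          simp_rw [this, Finset.sum_ite_mem, Finset.univ_inter]
          exact ht.symm
        have hEP : EPval m' p Pm (fun S => if S ∈ F then cP S else 0) = t := by
          rw [EPval_eq]
          have : ∀ S : Finset (Fin m'),
              (if S ∈ F then cP S else 0) * cP S = if S ∈ F then cP S ^ 2 else 0 := by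
            intro S; split
            · rw [sq]
            · rw [zero_mul]
          simp_rw [hcP] at this ⊢
          simp_rw [this]
          rw [Finset.sum_ite_mem, Finset.univ_inter]
        rw [hEP, hEQ, hcn, Real.div_sqrt]
  refine ⟨⟨?_, fun b hb => hb hmem⟩, fun ε hε g h1 h2 h3 => le_trans (hub g h1 h2 h3) hε⟩
  rintro r ⟨g, h1, h2, h3, rfl⟩
  exact hub g h1 h2 h3
end

section
/- In the planted hypergraph model, let φ(0) = −√(p/(1−p)) and φ(1) = √((1−p)/p) with p = 1/|Γ|, and write Y_e^φ = φ(Y_e). Then for every nonempty set S of potential hyperedges, E_{Y∼P}[ ∏_{e∈S} Y_e^φ ] ≤ |Γ|^{|S|/2} · Pr_{Y∼P}[ every e ∈ S is planted ]. -/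
open Finset

open scoped Classical

/-- Sum over Boolean vectors of a product factorizes. -/
lemma sum_prod_bool {E : Type*} [DecidableEq E] [Fintype E] (F : E → Bool → ℝ) :
    ∑ c : E → Bool, ∏ e, F e (c e) = ∏ e, (F e true + F e false) := by
  classical
  rw [← Fintype.piFinset_univ, ← Finset.prod_univ_sum]
  refine Finset.prod_congr rfl fun e _ => ?_
  simp [Fintype.sum_bool]

set_option maxHeartbeats 1000000

/-- In the planted hypergraph model (potential hyperedges are pairs
`e = (J, σ)` with `J ∈ X = {(N_H(i,1), …, N_H(i,k)) : i ∈ [m]}` and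
`σ ∈ Σ^k`; the sample consists of independent inclusion coins `ω.1 e`, each `true`
with probability `p = 1/|Γ|`, together with a uniform secret `ω.2 ∈ Σ^n`, and the
hyperedge `e` is present, `Y_e = 1`, iff its coin came up or it is planted, i.e.
`σ_ℓ = s_{J_ℓ}` for all `ℓ`), with `φ(0) = −√(p/(1−p))` and `φ(1) = √((1−p)/p)`:
for every nonempty set `S` of potential hyperedges,
`E_P[∏_{e∈S} φ(Y_e)] ≤ |Γ|^{|S|/2} · Pr_P[every e ∈ S is planted]`. -/
theorem stmt13 (m n k : ℕ) (H : Fin m → Fin n → ZMod 2)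
    (hH : ∀ i, (Finset.univ.filter (fun j => H i j ≠ 0)).card = k)
    (Sa Γa : Type*) [Fintype Sa] [Nonempty Sa] [Fintype Γa]
    (hΓ : 2 ≤ Fintype.card Γa)
    (S : Finset ({J : Fin k → Fin n // ∃ i, J = nbr (H i) (hH i)} × (Fin k → Sa)))
    (hS : S.Nonempty) :
    (∑ ω : (({J : Fin k → Fin n // ∃ i, J = nbr (H i) (hH i)} × (Fin k → Sa)) → Bool) ×
        (Fin n → Sa),
      ((∏ e, if ω.1 e then ((Fintype.card Γa : ℝ))⁻¹ else 1 - (Fintype.card Γa : ℝ)⁻¹) *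
          (1 / (Nat.card (Fin n → Sa) : ℝ))) *
        ∏ e ∈ S,
          (if ω.1 e = true ∨ ∀ ℓ, e.2 ℓ = ω.2 (e.1.1 ℓ) then
            Real.sqrt ((1 - (Fintype.card Γa : ℝ)⁻¹) / (Fintype.card Γa : ℝ)⁻¹)
          else
            -Real.sqrt ((Fintype.card Γa : ℝ)⁻¹ / (1 - (Fintype.card Γa : ℝ)⁻¹)))) ≤
    (Fintype.card Γa : ℝ) ^ ((S.card : ℝ) / 2) *
      prSum
        (fun ω : (({J : Fin k → Fin n // ∃ i, J = nbr (H i) (hH i)} × (Fin k → Sa)) → Bool) ×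
            (Fin n → Sa) =>
          (∏ e, if ω.1 e then ((Fintype.card Γa : ℝ))⁻¹ else 1 - (Fintype.card Γa : ℝ)⁻¹) *
            (1 / (Nat.card (Fin n → Sa) : ℝ)))
        (fun ω => ∀ e ∈ S, ∀ ℓ, e.2 ℓ = ω.2 (e.1.1 ℓ)) := by
  have hcard2 : (2:ℝ) ≤ (Fintype.card Γa : ℝ) := by exact_mod_cast hΓ
  set q : ℝ := (Fintype.card Γa : ℝ)⁻¹ with hqdef
  have hq0 : 0 < q := by rw [hqdef]; exact inv_pos.mpr (by linarith)
  have hq1 : q < 1 := by rw [hqdef]; exact inv_lt_one_of_one_lt₀ (by linarith)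
  have h1q : 0 < 1 - q := by linarith
  set A : ℝ := Real.sqrt ((1 - q) / q) with hAdef
  set B : ℝ := Real.sqrt (q / (1 - q)) with hBdef
  set N : ℝ := (1 / (Nat.card (Fin n → Sa) : ℝ)) with hNdef
  have hN0 : 0 ≤ N := by rw [hNdef]; positivity
  have hzero : q * A + (1 - q) * (-B) = 0 := by
    have e1 : q * A = Real.sqrt (q * (1 - q)) := by
      rw [hAdef, ← Real.sqrt_sq hq0.le, ← Real.sqrt_mul (by positivity)]
      congr 1
      field_simp
      rw [Real.sqrt_sq hq0.le]
    have e2 : (1 - q) * B = Real.sqrt (q * (1 - q)) := by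
      rw [hBdef, ← Real.sqrt_sq h1q.le, ← Real.sqrt_mul (by positivity)]
      congr 1
      field_simp
      rw [Real.sq_sqrt (by nlinarith)]
    rw [mul_neg, e1, e2]
    ring
  have key : ∀ s : Fin n → Sa,
      (∑ c : (({J : Fin k → Fin n // ∃ i, J = nbr (H i) (hH i)} × (Fin k → Sa)) → Bool),
        ((∏ e, if c e then q else 1 - q) * N) *
          ∏ e ∈ S, (if c e = true ∨ ∀ ℓ, e.2 ℓ = s (e.1.1 ℓ) then A else -B))
      = if (∀ e ∈ S, ∀ ℓ, e.2 ℓ = s (e.1.1 ℓ)) then A ^ S.card * N else 0 := by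
    intro s
    have step : ∀ c : (({J : Fin k → Fin n // ∃ i, J = nbr (H i) (hH i)} × (Fin k → Sa)) → Bool),
        ((∏ e, if c e then q else 1 - q) * N) *
            ∏ e ∈ S, (if c e = true ∨ ∀ ℓ, e.2 ℓ = s (e.1.1 ℓ) then A else -B)
        = N * ∏ e, ((if c e then q else 1 - q) *
            (if e ∈ S then (if c e = true ∨ ∀ ℓ, e.2 ℓ = s (e.1.1 ℓ) then A else -B) else 1)) := by
      intro c
      rw [Finset.prod_mul_distrib, Finset.prod_ite_mem, Finset.univ_inter]
      ring
    simp only [step]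
    rw [← Finset.mul_sum]
    have hswap : (∑ c : (({J : Fin k → Fin n // ∃ i, J = nbr (H i) (hH i)} × (Fin k → Sa)) → Bool),
        ∏ e, ((if c e then q else 1 - q) *
          (if e ∈ S then (if c e = true ∨ ∀ ℓ, e.2 ℓ = s (e.1.1 ℓ) then A else -B) else 1)))
        = ∏ e : ({J : Fin k → Fin n // ∃ i, J = nbr (H i) (hH i)} × (Fin k → Sa)),
          ((if true then q else 1 - q) *
            (if e ∈ S then (if true = true ∨ ∀ ℓ, e.2 ℓ = s (e.1.1 ℓ) then A else -B) else 1) +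
           (if false then q else 1 - q) *
            (if e ∈ S then (if false = true ∨ ∀ ℓ, e.2 ℓ = s (e.1.1 ℓ) then A else -B) else 1)) :=
      sum_prod_bool (fun e b => (if b then q else 1 - q) *
        (if e ∈ S then (if b = true ∨ ∀ ℓ, e.2 ℓ = s (e.1.1 ℓ) then A else -B) else 1))
    rw [hswap]
    have factor : ∀ e : ({J : Fin k → Fin n // ∃ i, J = nbr (H i) (hH i)} × (Fin k → Sa)),
        ((if true then q else 1 - q) *
            (if e ∈ S then (if true = true ∨ ∀ ℓ, e.2 ℓ = s (e.1.1 ℓ) then A else -B) else 1) +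
         (if false then q else 1 - q) *
            (if e ∈ S then (if false = true ∨ ∀ ℓ, e.2 ℓ = s (e.1.1 ℓ) then A else -B) else 1))
        = if e ∈ S then (if (∀ ℓ, e.2 ℓ = s (e.1.1 ℓ)) then A else 0) else 1 := by
      intro e
      have h1 : (true = true ∨ ∀ ℓ, e.2 ℓ = s (e.1.1 ℓ)) := Or.inl rfl
      by_cases heS : e ∈ S
      · by_cases hpl : ∀ ℓ, e.2 ℓ = s (e.1.1 ℓ)
        · have h2 : (false = true ∨ ∀ ℓ, e.2 ℓ = s (e.1.1 ℓ)) := Or.inr hpl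
          simp only [if_pos heS, Bool.false_eq_true, false_or, true_or, if_true, if_false,
            if_pos hpl]
          ring
        · have h2 : ¬(false = true ∨ ∀ ℓ, e.2 ℓ = s (e.1.1 ℓ)) := by
            simp [hpl]
          simp only [if_pos heS, Bool.false_eq_true, false_or, true_or, if_true, if_false,
            if_neg hpl]
          linarith [hzero]
      · simp only [if_neg heS, if_true, Bool.false_eq_true, if_false, mul_one]
        ring
    have hprod : (∏ e : ({J : Fin k → Fin n // ∃ i, J = nbr (H i) (hH i)} × (Fin k → Sa)),
        ((if true then q else 1 - q) *
            (if e ∈ S then (if true = true ∨ ∀ ℓ, e.2 ℓ = s (e.1.1 ℓ) then A else -B) else 1) +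
         (if false then q else 1 - q) *
            (if e ∈ S then (if false = true ∨ ∀ ℓ, e.2 ℓ = s (e.1.1 ℓ) then A else -B) else 1)))
        = if (∀ e ∈ S, ∀ ℓ, e.2 ℓ = s (e.1.1 ℓ)) then A ^ S.card else 0 := by
      rw [Finset.prod_congr rfl fun e _ => factor e, Finset.prod_ite_mem, Finset.univ_inter]
      by_cases hall : ∀ e ∈ S, ∀ ℓ, e.2 ℓ = s (e.1.1 ℓ)
      · rw [if_pos hall, Finset.prod_congr rfl (fun e he => if_pos (hall e he)),
          Finset.prod_const]
      · rw [if_neg hall]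
        obtain ⟨e0, hne0⟩ := not_forall.mp hall
        obtain ⟨he0, hne⟩ := Classical.not_imp.mp hne0
        exact Finset.prod_eq_zero he0 (if_neg hne)
    rw [hprod]
    split_ifs <;> ring
  have hmass : (∑ c : (({J : Fin k → Fin n // ∃ i, J = nbr (H i) (hH i)} × (Fin k → Sa)) → Bool),
      ∏ e, if c e then q else 1 - q) = 1 := by
    have hswap2 : (∑ c : (({J : Fin k → Fin n // ∃ i, J = nbr (H i) (hH i)} × (Fin k → Sa)) → Bool),
        ∏ e : ({J : Fin k → Fin n // ∃ i, J = nbr (H i) (hH i)} × (Fin k → Sa)),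
          (if c e then q else 1 - q))
        = ∏ e : ({J : Fin k → Fin n // ∃ i, J = nbr (H i) (hH i)} × (Fin k → Sa)),
          ((if true then q else 1 - q) + (if false then q else 1 - q)) :=
      sum_prod_bool (fun _ b => if b then q else 1 - q)
    rw [hswap2]
    simp
  have hL : (∑ ω : (({J : Fin k → Fin n // ∃ i, J = nbr (H i) (hH i)} × (Fin k → Sa)) → Bool) ×
        (Fin n → Sa),
      ((∏ e, if ω.1 e then q else 1 - q) * N) *
        ∏ e ∈ S, (if ω.1 e = true ∨ ∀ ℓ, e.2 ℓ = ω.2 (e.1.1 ℓ) then A else -B))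
      = ∑ s : Fin n → Sa,
          if (∀ e ∈ S, ∀ ℓ, e.2 ℓ = s (e.1.1 ℓ)) then A ^ S.card * N else 0 := by
    rw [Fintype.sum_prod_type, Finset.sum_comm]
    exact Finset.sum_congr rfl fun s _ => key s
  have hR : prSum
        (fun ω : (({J : Fin k → Fin n // ∃ i, J = nbr (H i) (hH i)} × (Fin k → Sa)) → Bool) ×
            (Fin n → Sa) =>
          (∏ e, if ω.1 e then q else 1 - q) * N)
        (fun ω => ∀ e ∈ S, ∀ ℓ, e.2 ℓ = ω.2 (e.1.1 ℓ))
      = ∑ s : Fin n → Sa, if (∀ e ∈ S, ∀ ℓ, e.2 ℓ = s (e.1.1 ℓ)) then N else 0 := by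
    unfold prSum
    simp only [Fintype.sum_prod_type]
    rw [Finset.sum_comm]
    refine Finset.sum_congr rfl fun s _ => ?_
    by_cases h : ∀ e ∈ S, ∀ ℓ, e.2 ℓ = s (e.1.1 ℓ)
    · simp only [if_pos h]
      rw [← Finset.sum_mul, hmass, one_mul]
    · simp only [if_neg h]
      simp
  rw [hL, hR]
  have hApow : A ^ S.card ≤ (Fintype.card Γa : ℝ) ^ ((S.card : ℝ) / 2) := by
    have h1 : A ≤ Real.sqrt (Fintype.card Γa : ℝ) := by
      rw [hAdef]
      apply Real.sqrt_le_sqrt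
      rw [div_le_iff₀ hq0]
      have hcq : (Fintype.card Γa : ℝ) * q = 1 := by
        rw [hqdef]
        field_simp
      rw [hcq]
      linarith
    have h2 : (Fintype.card Γa : ℝ) ^ ((S.card : ℝ) / 2)
        = (Real.sqrt (Fintype.card Γa : ℝ)) ^ S.card := by
      rw [Real.sqrt_eq_rpow, ← Real.rpow_natCast ((Fintype.card Γa : ℝ) ^ ((1:ℝ)/2)) S.card,
        ← Real.rpow_mul (by positivity)]
      congr 1
      ring
    rw [h2]
    exact pow_le_pow_left₀ (Real.sqrt_nonneg _) h1 _
  calc (∑ s : Fin n → Sa, if (∀ e ∈ S, ∀ ℓ, e.2 ℓ = s (e.1.1 ℓ)) then A ^ S.card * N else 0)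
      = A ^ S.card * ∑ s : Fin n → Sa, if (∀ e ∈ S, ∀ ℓ, e.2 ℓ = s (e.1.1 ℓ)) then N else 0 := by
        rw [Finset.mul_sum]
        exact Finset.sum_congr rfl fun s _ => by split_ifs <;> ring
    _ ≤ (Fintype.card Γa : ℝ) ^ ((S.card : ℝ) / 2) *
          ∑ s : Fin n → Sa, if (∀ e ∈ S, ∀ ℓ, e.2 ℓ = s (e.1.1 ℓ)) then N else 0 := by
        apply mul_le_mul_of_nonneg_right hApow
        apply Finset.sum_nonneg
        intro s _
        split_ifs
        · exact hN0
        · exact le_refl 0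
end

section
/- Let H be an (m, n, k)-matrix that is a (γ, t)-expander, let Σ be a finite alphabet with |Σ| ≥ 1, and let s be uniform in Σ^n. Let S be a set of tuples of the form ((j_1, σ_1), …, (j_k, σ_k)), where (j_1, …, j_k) = (N_H(i,1), …, N_H(i,k)) for some row i of H and σ_ℓ ∈ Σ, with 1 ≤ |S| ≤ t. Then Pr_s[ for every tuple in S and every ℓ ∈ [k], σ_ℓ = s_{j_ℓ} ] ≤ |Σ|^{−γ·k·|S|}. -/
open Finset

/-- Hamming weight of the coordinatewise logical OR of the rows of `G` indexed
by the set `T`. -/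
noncomputable def orWeight {ρ ν : Type*} [Fintype ν] (G : ρ → ν → ZMod 2)
    (T : Finset ρ) : ℕ :=
  Nat.card {j : ν // ∃ i ∈ T, G i j ≠ 0}

/-- `G` is a `(γ, t)`-expander: every nonempty set of at most `t` rows has the
Hamming weight of its coordinatewise OR at least `γ·k` times the number of rows. -/
def IsExpander {ρ ν : Type*} [Fintype ν] (G : ρ → ν → ZMod 2) (γ : ℝ)
    (k t : ℕ) : Prop :=
  ∀ T : Finset ρ, T.Nonempty → T.card ≤ t →
    (γ * k * T.card : ℝ) ≤ (orWeight G T : ℝ)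

lemma nbr_surj {n k : ℕ} (r : Fin n → ZMod 2)
    (hr : (Finset.univ.filter (fun c => r c ≠ 0)).card = k) {j : Fin n}
    (hj : r j ≠ 0) : ∃ ℓ : Fin k, nbr r hr ℓ = j := by
  have hmem : j ∈ Finset.univ.filter (fun c => r c ≠ 0) := by simp [hj]
  obtain ⟨ℓ, hℓ⟩ := (Finset.orderIsoOfFin _ hr).surjective ⟨j, hmem⟩
  exact ⟨ℓ, congrArg Subtype.val hℓ⟩

/-- Let `H` be an `(m,n,k)`-matrix that is a `(γ,t)`-expander, `Σ`
a nonempty finite alphabet, and `s` uniform in `Σ^n`.  Let `S` be a set of tuples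
`((j_1, σ_1), …, (j_k, σ_k))` — encoded as pairs `(J, σ)` with
`J = (N_H(i,1), …, N_H(i,k))` for some row `i` — with `1 ≤ |S| ≤ t`.  Then the
probability (over uniform `s`) that every tuple of `S` satisfies `σ_ℓ = s_{j_ℓ}`
for all `ℓ` is at most `|Σ|^{−γ·k·|S|}`. -/
theorem stmt14 (m n k t : ℕ) (γ : ℝ) (H : Fin m → Fin n → ZMod 2)
    (hH : ∀ i, (Finset.univ.filter (fun j => H i j ≠ 0)).card = k)
    (hexp : IsExpander H γ k t)
    (Sa : Type*) [Fintype Sa] [Nonempty Sa]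
    (S : Finset ((Fin k → Fin n) × (Fin k → Sa)))
    (hSnbr : ∀ e ∈ S, ∃ i, e.1 = nbr (H i) (hH i))
    (hS1 : 1 ≤ S.card) (hSt : S.card ≤ t) :
    (Nat.card {s : Fin n → Sa // ∀ e ∈ S, ∀ ℓ, e.2 ℓ = s (e.1 ℓ)} : ℝ) /
      (Nat.card (Fin n → Sa) : ℝ) ≤
    (Fintype.card Sa : ℝ) ^ (-(γ * (k : ℝ) * (S.card : ℝ))) := by
  classical
  have hSne : S.Nonempty := Finset.card_pos.mp hS1
  have hcpos : (0:ℝ) < (Fintype.card Sa : ℝ) := by exact_mod_cast Fintype.card_pos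
  have hc1 : (1:ℝ) ≤ (Fintype.card Sa : ℝ) := by
    exact_mod_cast Nat.one_le_iff_ne_zero.mpr Fintype.card_ne_zero
  by_cases hinj : Set.InjOn (fun e : (Fin k → Fin n) × (Fin k → Sa) => e.1) S
  · choose f hf using hSnbr
    set T : Finset (Fin m) := S.attach.image (fun e => f e.1 e.2) with hT
    have hTcard : T.card = S.card := by
      rw [hT, Finset.card_image_of_injOn, Finset.card_attach]
      rintro ⟨e, he⟩ - ⟨e', he'⟩ - hfe
      have hee : e.1 = e'.1 := by
        rw [hf e he, hf e' he']
        simp only at hfe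
        rw [hfe]
      exact Subtype.ext (hinj he he' hee)
    have hTne : T.Nonempty := by
      obtain ⟨e, he⟩ := hSne
      exact ⟨f e he, Finset.mem_image.mpr ⟨⟨e, he⟩, Finset.mem_attach _ _, rfl⟩⟩
    have hW : γ * k * S.card ≤ (orWeight H T : ℝ) := by
      have := hexp T hTne (by rw [hTcard]; exact hSt)
      rwa [hTcard] at this
    set W := orWeight H T with hWdef
    have hWn : W ≤ n := by
      rw [hWdef, orWeight, Nat.card_eq_fintype_card]
      calc Fintype.card {j : Fin n // ∃ i ∈ T, H i j ≠ 0}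
          ≤ Fintype.card (Fin n) := Fintype.card_subtype_le _
        _ = n := Fintype.card_fin n
    have hcount : Nat.card {s : Fin n → Sa // ∀ e ∈ S, ∀ ℓ, e.2 ℓ = s (e.1 ℓ)}
        ≤ Fintype.card Sa ^ (n - W) := by
      have hinj2 : Function.Injective
          (fun (s : {s : Fin n → Sa // ∀ e ∈ S, ∀ ℓ, e.2 ℓ = s (e.1 ℓ)}) =>
            (fun j : {j : Fin n // ¬ ∃ i ∈ T, H i j ≠ 0} => s.1 j.1)) := by
        intro s s' hss
        ext j
        by_cases hj : ∃ i ∈ T, H i j ≠ 0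
        · obtain ⟨i, hiT, hij⟩ := hj
          obtain ⟨e, -, rfl⟩ := Finset.mem_image.mp hiT
          obtain ⟨ℓ, hℓ⟩ := nbr_surj (H (f e.1 e.2)) (hH _) hij
          have h1 := s.2 e.1 e.2 ℓ
          have h2 := s'.2 e.1 e.2 ℓ
          rw [hf e.1 e.2, hℓ] at h1 h2
          rw [← h1, ← h2]
        · exact congrFun hss ⟨j, hj⟩
      refine le_trans (Nat.card_le_card_of_injective _ hinj2) ?_
      have hcompl : Nat.card ({j : Fin n // ¬ ∃ i ∈ T, H i j ≠ 0} → Sa)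
          = Fintype.card Sa ^ (n - W) := by
        rw [Nat.card_eq_fintype_card, Fintype.card_fun]
        congr 1
        rw [hWdef, orWeight, Nat.card_eq_fintype_card, Fintype.card_subtype_compl,
          Fintype.card_fin]
      exact hcompl.le
    have hden : Nat.card (Fin n → Sa) = Fintype.card Sa ^ n := by
      rw [Nat.card_eq_fintype_card, Fintype.card_fun, Fintype.card_fin]
    have step1 : (Nat.card {s : Fin n → Sa // ∀ e ∈ S, ∀ ℓ, e.2 ℓ = s (e.1 ℓ)} : ℝ) /
        (Nat.card (Fin n → Sa) : ℝ)
        ≤ (Fintype.card Sa : ℝ) ^ (-(W:ℝ)) := by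
      rw [hden, div_le_iff₀ (by positivity)]
      push_cast
      calc (Nat.card {s : Fin n → Sa // ∀ e ∈ S, ∀ ℓ, e.2 ℓ = s (e.1 ℓ)} : ℝ)
          ≤ ((Fintype.card Sa ^ (n - W) : ℕ) : ℝ) := by exact_mod_cast hcount
        _ = (Fintype.card Sa : ℝ) ^ (((n - W : ℕ)) : ℝ) := by
            rw [Real.rpow_natCast]; push_cast; ring
        _ = (Fintype.card Sa : ℝ) ^ ((n:ℝ) - (W:ℝ)) := by
            rw [Nat.cast_sub hWn]
        _ = (Fintype.card Sa : ℝ) ^ (-(W:ℝ)) * (Fintype.card Sa : ℝ) ^ (n:ℕ) := by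
            rw [← Real.rpow_natCast (Fintype.card Sa : ℝ) n, ← Real.rpow_add hcpos]
            congr 1
            ring
    refine le_trans step1 ?_
    apply Real.rpow_le_rpow_of_exponent_le hc1
    linarith
  · rw [Set.InjOn] at hinj
    push_neg at hinj
    obtain ⟨e, he, e', he', h1, hne⟩ := hinj
    have hempty : Nat.card {s : Fin n → Sa // ∀ e ∈ S, ∀ ℓ, e.2 ℓ = s (e.1 ℓ)} = 0 := by
      rw [Nat.card_eq_zero]
      left
      constructor
      intro ⟨s, hs⟩
      apply hne
      apply Prod.ext h1
      funext ℓ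
      rw [hs e he ℓ, hs e' he' ℓ, h1]
    rw [hempty]
    simp only [Nat.cast_zero, zero_div]
    positivity
end

section
/- Let Σ be a finite alphabet whose size is a power of two, let Γ be a finite alphabet with |Γ| ≥ 2, let k be a positive integer, let b ∈ Γ, let φ_1, …, φ_k : Σ → F_2^{log₂|Σ|} be bijections, and let p, q : F_2^{k·log₂|Σ|} → F_2 be polynomials of total degree at most ⌊k·log₂|Σ|/100⌋, not both identically zero as functions. Let f : Σ^k → Γ be a uniformly random function, and define f' : F_2^{k·log₂|Σ|} → F_2 by f'(φ_1(σ_1), …, φ_k(σ_k)) = 0 when f(σ_1, …, σ_k) = b and f' = 1 otherwise. Then Pr_f[ p(x)·f'(x) = q(x) for every x ∈ F_2^{k·log₂|Σ|} ] ≤ (1 − 1/|Γ|)^{2^{k·log₂|Σ| − ⌊k·log₂|Σ|/100⌋}}. -/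
set_option linter.unusedVariables false
set_option linter.unusedSectionVars false



open Finset

open scoped Classical

namespace Stmt17Aux

variable {ι : Type*} [DecidableEq ι]

def ind (U : Finset ι) : ι → ZMod 2 := fun i => if i ∈ U then 1 else 0

def coefF (F : Finset ι → ZMod 2) (S : Finset ι) : ZMod 2 := ∑ U ∈ S.powerset, F U

lemma sum_ind (A B : Finset ι) :
    (∑ Z ∈ B.powerset, if A ⊆ Z then (1 : ZMod 2) else 0) = if A = B then 1 else 0 := by
  rw [Finset.sum_boole]
  rw [← Finset.Icc_eq_filter_powerset]
  by_cases hAB : A ⊆ B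
  · rw [Finset.card_Icc_finset hAB]
    by_cases h : A = B
    · subst h; simp
    · have h1 : A.card < B.card := Finset.card_lt_card (lt_of_le_of_ne hAB h)
      rw [if_neg h]
      have : ((2 : ℕ) ^ (B.card - A.card) : ZMod 2) = 0 := by
        have : (2 : ℕ) ∣ 2 ^ (B.card - A.card) := dvd_pow_self 2 (by omega)
        exact_mod_cast (ZMod.natCast_eq_zero_iff _ 2).2 this
      simpa using this
  · rw [Finset.Icc_eq_empty hAB]
    have : A ≠ B := by rintro rfl; exact hAB subset_rfl
    simp [this]

lemma inversion (F : Finset ι → ZMod 2) (U : Finset ι) :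
    ∑ V ∈ U.powerset, coefF F V = F U := by
  have step : ∀ V ∈ U.powerset, coefF F V
      = ∑ W ∈ U.powerset, F W * (if W ⊆ V then 1 else 0) := by
    intro V hV
    rw [Finset.mem_powerset] at hV
    have hps : V.powerset = U.powerset.filter (fun W => W ⊆ V) := by
      ext W
      simp only [mem_powerset, mem_filter]
      exact ⟨fun h => ⟨h.trans hV, h⟩, fun h => h.2⟩
    rw [coefF, hps, Finset.sum_filter]
    simp [mul_ite]
  rw [Finset.sum_congr rfl step, Finset.sum_comm]
  have : ∀ W ∈ U.powerset,
      (∑ V ∈ U.powerset, F W * (if W ⊆ V then 1 else 0)) = F W * (if W = U then 1 else 0) := by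
    intro W _
    rw [← Finset.mul_sum, sum_ind]
  rw [Finset.sum_congr rfl this]
  simp [mul_ite, Finset.sum_ite_eq']

lemma exists_coef (F : Finset ι → ZMod 2) (h : ∃ U, F U ≠ 0) [Fintype ι] :
    ∃ S, coefF F S ≠ 0 := by
  obtain ⟨U0, hU0⟩ := h
  -- take U of minimal card with F U ≠ 0
  obtain ⟨U, hU, hmin⟩ := Finset.exists_min_image (univ.filter fun U => F U ≠ 0)
    (fun U => U.card) ⟨U0, by simp [hU0]⟩
  simp only [mem_filter, mem_univ, true_and] at hU hmin
  refine ⟨U, ?_⟩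
  rw [coefF]
  rw [Finset.sum_eq_single U]
  · exact hU
  · intro V hV hne
    rw [Finset.mem_powerset] at hV
    by_contra hFV
    have := hmin V (by simpa using hFV)
    have : V.card < U.card := Finset.card_lt_card (lt_of_le_of_ne hV hne)
    omega
  · intro h; exact absurd (Finset.mem_powerset.2 subset_rfl) h


lemma coef_eval (p : MvPolynomial ι (ZMod 2)) (S : Finset ι) (hS : p.totalDegree < S.card) :
    coefF (fun U => MvPolynomial.eval (ind U) p) S = 0 := by
  have hprod : ∀ (m : ι →₀ ℕ) (U : Finset ι),
      (∏ i ∈ m.support, ind U i ^ m i) = if m.support ⊆ U then 1 else 0 := by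
    intro m U
    by_cases hsub : m.support ⊆ U
    · rw [if_pos hsub]
      apply Finset.prod_eq_one
      intro i hi
      rw [ind, if_pos (hsub hi), one_pow]
    · rw [if_neg hsub]
      obtain ⟨i, hi, hiU⟩ := Finset.not_subset.1 hsub
      apply Finset.prod_eq_zero hi
      rw [ind]
      simp only [if_neg hiU]
      exact zero_pow (Finsupp.mem_support_iff.1 hi)
  have heval : ∀ U : Finset ι, MvPolynomial.eval (ind U) p
      = ∑ m ∈ p.support, MvPolynomial.coeff m p * (if m.support ⊆ U then 1 else 0) := by
    intro U
    rw [MvPolynomial.eval_eq]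
    exact Finset.sum_congr rfl fun m _ => by rw [hprod]
  rw [coefF]
  calc (∑ U ∈ S.powerset, MvPolynomial.eval (ind U) p)
      = ∑ U ∈ S.powerset, ∑ m ∈ p.support,
          MvPolynomial.coeff m p * (if m.support ⊆ U then 1 else 0) :=
        Finset.sum_congr rfl fun U _ => heval U
    _ = ∑ m ∈ p.support, ∑ U ∈ S.powerset,
          MvPolynomial.coeff m p * (if m.support ⊆ U then 1 else 0) := Finset.sum_comm
    _ = ∑ m ∈ p.support, MvPolynomial.coeff m p * (if m.support = S then 1 else 0) :=
        Finset.sum_congr rfl fun m _ => by rw [← Finset.mul_sum, sum_ind]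
    _ = 0 := by
        apply Finset.sum_eq_zero
        intro m hm
        have h1 : m.support.card ≤ m.sum fun _ n => n := by
          rw [Finset.card_eq_sum_ones, Finsupp.sum]
          exact Finset.sum_le_sum fun i hi =>
            Nat.one_le_iff_ne_zero.2 (Finsupp.mem_support_iff.1 hi)
        have h2 : (m.sum fun _ n => n) ≤ p.totalDegree := MvPolynomial.le_totalDegree hm
        have : m.support ≠ S := by
          intro h; rw [h] at h1; omega
        rw [if_neg this, mul_zero]

lemma count [Fintype ι] (F : Finset ι → ZMod 2) (d : ℕ)
    (hc : ∀ S : Finset ι, d < S.card → coefF F S = 0) (h : ∃ U, F U ≠ 0) :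
    2 ^ (Fintype.card ι - d) ≤ (univ.filter fun U : Finset ι => F U ≠ 0).card := by
  obtain ⟨S, hSmem, hmax⟩ := Finset.exists_max_image
    (univ.filter fun S : Finset ι => coefF F S ≠ 0) (fun S => S.card)
    (by obtain ⟨S, hS⟩ := exists_coef F h; exact ⟨S, by simp [hS]⟩)
  simp only [mem_filter, mem_univ, true_and] at hSmem hmax
  have hmax' : ∀ V : Finset ι, S.card < V.card → coefF F V = 0 := by
    intro V hV
    by_contra hne
    have := hmax V (by simpa using hne)
    omega
  have hSd : S.card ≤ d := by
    by_contra hcon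
    exact hSmem (hc S (by omega))
  -- key subcube claim
  have key : ∀ W : Finset ι, W ⊆ Sᶜ → ∃ U, F U ≠ 0 ∧ U \ S = W := by
    intro W hW
    have hdisj : Disjoint W S := Finset.disjoint_left.2 fun i hiW =>
      by have := hW hiW; simp at this; exact this
    have hsum : (∑ Z ∈ S.powerset, F (W ∪ Z)) = coefF F S := by
      calc (∑ Z ∈ S.powerset, F (W ∪ Z))
          = ∑ Z ∈ S.powerset, ∑ V ∈ (W ∪ S).powerset,
              coefF F V * (if V ⊆ W ∪ Z then 1 else 0) := by
            apply Finset.sum_congr rfl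
            intro Z hZ
            rw [Finset.mem_powerset] at hZ
            rw [← inversion F (W ∪ Z)]
            have hps : (W ∪ Z).powerset = (W ∪ S).powerset.filter (fun V => V ⊆ W ∪ Z) := by
              ext V
              simp only [mem_powerset, mem_filter]
              constructor
              · intro hv
                exact ⟨hv.trans (Finset.union_subset_union_right hZ), hv⟩
              · exact fun h => h.2
            rw [hps, Finset.sum_filter]
            simp [mul_ite]
        _ = ∑ V ∈ (W ∪ S).powerset, coefF F V *
              (∑ Z ∈ S.powerset, if V \ W ⊆ Z then 1 else 0) := by
            rw [Finset.sum_comm]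
            apply Finset.sum_congr rfl
            intro V _
            rw [Finset.mul_sum]
            apply Finset.sum_congr rfl
            intro Z _
            congr 1
            have : V ⊆ W ∪ Z ↔ V \ W ⊆ Z := by
              constructor
              · intro h i hi
                rcases Finset.mem_sdiff.1 hi with ⟨h1, h2⟩
                rcases Finset.mem_union.1 (h h1) with h3 | h3
                · exact absurd h3 h2
                · exact h3
              · intro h i hi
                by_cases hiW : i ∈ W
                · exact Finset.mem_union_left _ hiW
                · exact Finset.mem_union_right _ (h (Finset.mem_sdiff.2 ⟨hi, hiW⟩))
            simp only [this]
        _ = ∑ V ∈ (W ∪ S).powerset, coefF F V * (if V \ W = S then 1 else 0) :=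
            Finset.sum_congr rfl fun V _ => by rw [sum_ind]
        _ = coefF F S := by
            rw [Finset.sum_eq_single S]
            · rw [Finset.sdiff_eq_self_of_disjoint (Finset.disjoint_left.2
                fun i hiS hiW => Finset.disjoint_right.1 hdisj hiS hiW), if_pos rfl, mul_one]
            · intro V hV hne
              by_cases hVW : V \ W = S
              · have hSV : S ⊆ V := hVW ▸ Finset.sdiff_subset
                have : S.card < V.card :=
                  Finset.card_lt_card (lt_of_le_of_ne hSV (fun e => hne e.symm))
                rw [hmax' V this, zero_mul]
              · rw [if_neg hVW, mul_zero]
            · intro hS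
              exact absurd (Finset.mem_powerset.2 Finset.subset_union_right) hS
    by_contra hcon
    push_neg at hcon
    have : (∑ Z ∈ S.powerset, F (W ∪ Z)) = 0 := by
      apply Finset.sum_eq_zero
      intro Z hZ
      rw [Finset.mem_powerset] at hZ
      by_contra hFZ
      have hUW : (W ∪ Z) \ S = W := by
        rw [Finset.union_sdiff_distrib,
          Finset.sdiff_eq_self_of_disjoint hdisj,
          Finset.sdiff_eq_empty_iff_subset.2 hZ, Finset.union_empty]
      exact hcon (W ∪ Z) hFZ hUW
    rw [hsum] at this
    exact hSmem this
  -- build injection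
  classical
  let u : Finset ι → Finset ι := fun W =>
    if h : ∃ U, F U ≠ 0 ∧ U \ S = W then h.choose else ∅
  have hu : ∀ W ∈ Sᶜ.powerset, F (u W) ≠ 0 ∧ (u W) \ S = W := by
    intro W hW
    rw [Finset.mem_powerset] at hW
    have h := key W hW
    simp only [u, dif_pos h]
    exact h.choose_spec
  have hinj : Set.InjOn u Sᶜ.powerset := by
    intro W1 h1 W2 h2 he
    rw [← (hu W1 h1).2, ← (hu W2 h2).2, he]
  have hcard : Sᶜ.powerset.card ≤ (univ.filter fun U : Finset ι => F U ≠ 0).card := by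
    apply Finset.card_le_card_of_injOn u
    · intro W hW
      simp only [Finset.mem_coe, mem_filter, mem_univ, true_and]
      exact (hu W hW).1
    · exact hinj
  rw [Finset.card_powerset, Finset.card_compl] at hcard
  calc (2:ℕ) ^ (Fintype.card ι - d) ≤ 2 ^ (Fintype.card ι - S.card) :=
        Nat.pow_le_pow_right (by omega) (Nat.sub_le_sub_left hSd _)
    _ ≤ _ := hcard

lemma poly_count {ι : Type*} [Fintype ι] [DecidableEq ι] (g : MvPolynomial ι (ZMod 2)) (d : ℕ)
    (hd : g.totalDegree ≤ d) (hne : ∃ x : ι → ZMod 2, MvPolynomial.eval x g ≠ 0) :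
    2 ^ (Fintype.card ι - d) ≤
      (univ.filter fun U : Finset ι => MvPolynomial.eval (ind U) g ≠ 0).card := by
  apply count
  · intro S hS
    exact coef_eval g S (lt_of_le_of_lt hd hS)
  · obtain ⟨x, hx⟩ := hne
    refine ⟨univ.filter (fun i => x i = 1), ?_⟩
    have h01 : ∀ v : ZMod 2, (if v = 1 then (1 : ZMod 2) else 0) = v := by decide
    have hx' : ind (univ.filter fun i => x i = 1) = x := by
      funext i
      simp only [ind, mem_filter, mem_univ, true_and]
      exact h01 (x i)
    rw [hx']
    exact hx

lemma main_aux {D Γ : Type*} [Fintype D] [Fintype Γ] [DecidableEq D] [DecidableEq Γ]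
    (T : Finset D) (A : Finset Γ) (E : ℕ)
    (hΓ : 2 ≤ Fintype.card Γ)
    (hA : A.card + 1 ≤ Fintype.card Γ)
    (hT : 2 ^ E ≤ T.card)
    (P : (D → Γ) → Prop) (hP : ∀ f, P f → ∀ σ ∈ T, f σ ∈ A) :
    (Nat.card {f : D → Γ // P f} : ℝ) / (Nat.card (D → Γ) : ℝ)
      ≤ (1 - 1 / (Fintype.card Γ : ℝ)) ^ (2 ^ E) := by
  have hγ2 : (2 : ℝ) ≤ (Fintype.card Γ : ℝ) := by exact_mod_cast hΓ
  have hγ0 : (0 : ℝ) < (Fintype.card Γ : ℝ) := by linarith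
  have hγne : (Fintype.card Γ : ℝ) ≠ 0 := ne_of_gt hγ0
  have htm : T.card ≤ Fintype.card D := by
    rw [← Finset.card_univ]
    exact Finset.card_le_card (Finset.subset_univ T)
  have step1 : Nat.card {f : D → Γ // P f} ≤ Nat.card {f : D → Γ // ∀ σ ∈ T, f σ ∈ A} := by
    apply Nat.card_le_card_of_injective (fun f => ⟨f.1, hP f.1 f.2⟩)
    intro f g h
    simp only [Subtype.mk.injEq] at h
    exact Subtype.ext h
  have step2 : Nat.card {f : D → Γ // ∀ σ ∈ T, f σ ∈ A}
      ≤ A.card ^ T.card * Fintype.card Γ ^ (Fintype.card D - T.card) := by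
    have hinj : Function.Injective
        (fun f : {f : D → Γ // ∀ σ ∈ T, f σ ∈ A} =>
          ((fun s : T => (⟨f.1 s, f.2 s s.2⟩ : A)),
           (fun s : ↥(Tᶜ) => f.1 s))) := by
      intro f g h
      have h1 := congrArg Prod.fst h
      have h2 := congrArg Prod.snd h
      simp only at h1 h2
      apply Subtype.ext
      funext σ
      by_cases hσ : σ ∈ T
      · simpa using congrFun h1 ⟨σ, hσ⟩
      · exact congrFun h2 ⟨σ, by simpa using hσ⟩
    have hcard := Nat.card_le_card_of_injective _ hinj
    calc Nat.card {f : D → Γ // ∀ σ ∈ T, f σ ∈ A}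
        ≤ Nat.card ((T → A) × (↥(Tᶜ) → Γ)) := hcard
      _ = A.card ^ T.card * Fintype.card Γ ^ (Fintype.card D - T.card) := by
          rw [Nat.card_eq_fintype_card, Fintype.card_prod, Fintype.card_fun, Fintype.card_fun]
          simp [Finset.card_compl]
  have step3 : (Nat.card ((D → Γ)) : ℝ) = (Fintype.card Γ : ℝ) ^ Fintype.card D := by
    rw [Nat.card_eq_fintype_card, Fintype.card_fun]
    push_cast
    rfl
  have hAc : (A.card : ℝ) ≤ (Fintype.card Γ : ℝ) - 1 := by
    have : ((A.card : ℝ)) + 1 ≤ (Fintype.card Γ : ℝ) := by exact_mod_cast hA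
    linarith
  have hnum : (Nat.card {f : D → Γ // P f} : ℝ)
      ≤ (A.card : ℝ) ^ T.card * (Fintype.card Γ : ℝ) ^ (Fintype.card D - T.card) := by
    have := step1.trans step2
    exact_mod_cast this
  have h0 : (0 : ℝ) ≤ 1 - 1 / (Fintype.card Γ : ℝ) := by
    have : 1 / (Fintype.card Γ : ℝ) ≤ 1 := by rw [div_le_one hγ0]; linarith
    linarith
  have h1 : (1 : ℝ) - 1 / (Fintype.card Γ : ℝ) ≤ 1 := by
    have : (0:ℝ) ≤ 1 / (Fintype.card Γ : ℝ) := by positivity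
    linarith
  calc (Nat.card {f : D → Γ // P f} : ℝ) / (Nat.card ((D → Γ)) : ℝ)
      ≤ ((A.card : ℝ) ^ T.card * (Fintype.card Γ : ℝ) ^ (Fintype.card D - T.card)) /
          (Fintype.card Γ : ℝ) ^ Fintype.card D := by
        rw [step3]
        gcongr
    _ = ((A.card : ℝ) / (Fintype.card Γ : ℝ)) ^ T.card := by
        have hsplit : (Fintype.card Γ : ℝ) ^ Fintype.card D
            = (Fintype.card Γ : ℝ) ^ T.card * (Fintype.card Γ : ℝ) ^ (Fintype.card D - T.card) := by
          rw [← pow_add, Nat.add_sub_cancel' htm]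
        rw [hsplit, mul_div_mul_right _ _ (pow_ne_zero _ hγne), div_pow]
    _ ≤ (((Fintype.card Γ : ℝ) - 1) / (Fintype.card Γ : ℝ)) ^ T.card := by
        gcongr
    _ = (1 - 1 / (Fintype.card Γ : ℝ)) ^ T.card := by
        congr 1
        rw [sub_div, div_self hγne]
    _ ≤ (1 - 1 / (Fintype.card Γ : ℝ)) ^ (2 ^ E) := pow_le_pow_of_le_one h0 h1 hT

end Stmt17Aux

open Stmt17Aux

/-- Let `|Σ| = 2^a` (so `a = log₂|Σ|`), `|Γ| ≥ 2`, `k ≥ 1`, `b ∈ Γ`,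
`φ_1, …, φ_k : Σ ≃ F_2^a` bijections, and let `p, q` be polynomials over `F_2` in
the `k·a` variables (indexed by `Fin k × Fin a`) of total degree at most
`⌊k·a/100⌋`, not both identically zero as functions.  For a uniformly random
`f : Σ^k → Γ`, define `f' : F_2^{k·a} → F_2` by `f'(φ_1(σ_1), …, φ_k(σ_k)) = 0`
iff `f(σ_1, …, σ_k) = b` (and `1` otherwise).  Then the probability that
`p(x)·f'(x) = q(x)` for every `x` is at most
`(1 − 1/|Γ|)^{2^{k·a − ⌊k·a/100⌋}}`. -/
theorem stmt17 (Sa Γa : Type*) [Fintype Sa] [Fintype Γa] (a k : ℕ) (hk : 0 < k)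
    (hSa : Fintype.card Sa = 2 ^ a) (hΓ : 2 ≤ Fintype.card Γa)
    (b : Γa) (φ : Fin k → (Sa ≃ (Fin a → ZMod 2)))
    (p q : MvPolynomial (Fin k × Fin a) (ZMod 2))
    (hp : p.totalDegree ≤ k * a / 100) (hq : q.totalDegree ≤ k * a / 100)
    (hnz : ¬ ((∀ x : Fin k → Fin a → ZMod 2,
          MvPolynomial.eval (fun it => x it.1 it.2) p = 0) ∧
        (∀ x : Fin k → Fin a → ZMod 2,
          MvPolynomial.eval (fun it => x it.1 it.2) q = 0))) :
    (Nat.card {f : (Fin k → Sa) → Γa //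
        ∀ x : Fin k → Fin a → ZMod 2,
          MvPolynomial.eval (fun it => x it.1 it.2) p *
              (if f (fun ℓ => (φ ℓ).symm (x ℓ)) = b then 0 else 1) =
            MvPolynomial.eval (fun it => x it.1 it.2) q} : ℝ) /
      (Nat.card ((Fin k → Sa) → Γa) : ℝ) ≤
    (1 - 1 / (Fintype.card Γa : ℝ)) ^ (2 ^ (k * a - k * a / 100)) := by
  classical
  set Ev : ((Fin k → Sa) → Γa) → Prop := fun f =>
    ∀ x : Fin k → Fin a → ZMod 2,
      MvPolynomial.eval (fun it => x it.1 it.2) p *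
          (if f (fun ℓ => (φ ℓ).symm (x ℓ)) = b then 0 else 1) =
        MvPolynomial.eval (fun it => x it.1 it.2) q with hEv
  -- the curried/uncurried translation
  have hcur' : ∀ U : Finset (Fin k × Fin a),
      (fun it : Fin k × Fin a => ind U (it.1, it.2)) = ind U := by
    intro U
    funext it
    rfl
  -- choose the relevant polynomial and target set
  obtain ⟨g, A, hgd, hgne, hA, himp⟩ :
      ∃ (g : MvPolynomial (Fin k × Fin a) (ZMod 2)) (A : Finset Γa),
        g.totalDegree ≤ k * a / 100 ∧
        (∃ x : (Fin k × Fin a) → ZMod 2, MvPolynomial.eval x g ≠ 0) ∧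
        A.card + 1 ≤ Fintype.card Γa ∧
        ∀ f : (Fin k → Sa) → Γa, Ev f → ∀ U : Finset (Fin k × Fin a),
          MvPolynomial.eval (ind U) g ≠ 0 →
            f (fun ℓ => (φ ℓ).symm (fun j => ind U (ℓ, j))) ∈ A := by
    by_cases hq0 : ∀ x : Fin k → Fin a → ZMod 2,
        MvPolynomial.eval (fun it => x it.1 it.2) q = 0
    · -- q vanishes, so p does not
      have hpne : ∃ x : Fin k → Fin a → ZMod 2,
          MvPolynomial.eval (fun it => x it.1 it.2) p ≠ 0 := by
        by_contra hcon
        push_neg at hcon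
        exact hnz ⟨hcon, hq0⟩
      obtain ⟨x, hx⟩ := hpne
      refine ⟨p, {b}, hp, ⟨fun it => x it.1 it.2, hx⟩, by simpa using hΓ, ?_⟩
      intro f hf U hU
      have hfx := hf (fun ℓ j => ind U (ℓ, j))
      have hq0x := hq0 (fun ℓ j => ind U (ℓ, j))
      rw [hcur' U] at hfx hq0x
      rw [hq0x] at hfx
      by_cases hb : f (fun ℓ => (φ ℓ).symm (fun j => ind U (ℓ, j))) = b
      · simpa using hb
      · rw [if_neg hb, mul_one] at hfx
        exact absurd hfx hU
    · push_neg at hq0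
      obtain ⟨x, hx⟩ := hq0
      refine ⟨q, {b}ᶜ, hq, ⟨fun it => x it.1 it.2, hx⟩, ?_, ?_⟩
      · rw [Finset.card_compl, Finset.card_singleton]
        omega
      · intro f hf U hU
        have hfx := hf (fun ℓ j => ind U (ℓ, j))
        rw [hcur' U] at hfx
        simp only [Finset.mem_compl, Finset.mem_singleton]
        intro hb
        rw [if_pos hb, mul_zero] at hfx
        exact hU hfx.symm
  -- build the set of forced inputs
  set σf : Finset (Fin k × Fin a) → (Fin k → Sa) :=
    fun U ℓ => (φ ℓ).symm (fun j => ind U (ℓ, j)) with hσf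
  have hσinj : Function.Injective σf := by
    intro U V h
    have h2 : ∀ ℓ j, ind U (ℓ, j) = ind V (ℓ, j) := by
      intro ℓ j
      have h3 := congrFun h ℓ
      simp only [hσf] at h3
      have h4 := (φ ℓ).symm.injective h3
      exact congrFun h4 j
    ext ⟨ℓ, j⟩
    have := h2 ℓ j
    simp only [ind] at this
    by_cases h1 : (ℓ, j) ∈ U <;> by_cases hv : (ℓ, j) ∈ V <;>
      simp [h1, hv] at this ⊢
  set B : Finset (Finset (Fin k × Fin a)) :=
    univ.filter (fun U => MvPolynomial.eval (ind U) g ≠ 0) with hB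
  set T : Finset (Fin k → Sa) := B.image σf with hTdef
  have hT : 2 ^ (k * a - k * a / 100) ≤ T.card := by
    rw [hTdef, Finset.card_image_of_injective _ hσinj]
    have hι : Fintype.card (Fin k × Fin a) = k * a := by simp
    have := poly_count g (k * a / 100) hgd hgne
    rw [hι] at this
    exact this
  have := main_aux T A (k * a - k * a / 100) hΓ hA hT Ev ?_
  · exact this
  · intro f hf σ hσ
    rw [hTdef, Finset.mem_image] at hσ
    obtain ⟨U, hU, rfl⟩ := hσ
    rw [hB, Finset.mem_filter] at hU
    exact himp f hf U hU.2
end
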